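/- arXiv:1809.02937 — 2 statements merged into one kernel-verified Lean document; each statement's English description precedes it below -/
import Mathlib

section
/- Let $1 \le p_0 < q_0 \le \infty$, $p_0 < s < q_0$. Let $T$ be a sublinear operator bounded on $L^p(\mathbb{R})$ for all $p_0 < p < q_0$, with unweighted norm satisfying $\|T\|_{L^p\to L^p} \ge c\,p$ for all large $p$ (as for the Rubio de Francia square function with $p_0=2$, $q_0=\infty$, where $\|T\|_{L^p\to L^p}\simeq p$). If for all $w \in A_{s/2}$ one has $\|T\|_{L^s(w)\to L^s(w)} \le C[w]_{A_{s/2}}^{\beta}$, then $\beta \ge 1$. -/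
open MeasureTheory Set ENNReal

/-- The Muckenhoupt `A_r` characteristic of a weight `w` on `ℝ`,
`sup_I ⟨w⟩_I (⟨w^{1-r'}⟩_I)^{r-1}` over bounded intervals (note `1 - r' = -1/(r-1)`). -/
noncomputable def muckenhouptConst (r : ℝ) (w : ℝ → ℝ) : ℝ≥0∞ :=
  ⨆ (a : ℝ) (b : ℝ) (_ : a < b),
    ((ENNReal.ofReal (b - a))⁻¹ * ∫⁻ y in Set.Icc a b, ENNReal.ofReal (w y)) *
      ((ENNReal.ofReal (b - a))⁻¹ *
        ∫⁻ y in Set.Icc a b, ENNReal.ofReal (w y ^ (-(1 : ℝ) / (r - 1)))) ^ (r - 1)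

/-- Weighted `L^p(w)` norm. -/
noncomputable def weightedNorm (p : ℝ) (w : ℝ → ℝ) (f : ℝ → ℂ) : ℝ≥0∞ :=
  (∫⁻ x, (‖f x‖₊ : ℝ≥0∞) ^ p * ENNReal.ofReal (w x)) ^ (1 / p)

namespace RdF

set_option linter.unusedVariables false



def dd (γ : Bool) (n : ℤ) : ℤ := if γ then (if Even n then 1 else -1) else 0

noncomputable def ep (γ : Bool) (n k : ℤ) : ℝ := ((k : ℝ) + (dd γ n : ℝ)/3) * (2:ℝ)^n

noncomputable def JJ (γ : Bool) (n k : ℤ) : Set ℝ := Icc (ep γ n k) (ep γ n (k+1))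

lemma dd_true_cases (n : ℤ) : dd true n = 1 ∨ dd true n = -1 := by
  by_cases h : Even n <;> simp [dd, h]

lemma dd_cases (γ : Bool) (n : ℤ) : dd γ n = 0 ∨ dd γ n = 1 ∨ dd γ n = -1 := by
  cases γ
  · exact .inl rfl
  · rcases dd_true_cases n with h | h <;> simp [h]

lemma dd_succ (γ : Bool) (n : ℤ) : dd γ (n+1) = - dd γ n := by
  cases γ
  · rfl
  · by_cases h : Even n
    · have h1 : ¬ Even (n+1) := by simp [Int.even_add_one, h]
      simp [dd, h, h1]
    · have h1 : Even (n+1) := by simpa [Int.even_add_one] using h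
      simp [dd, h, h1]

lemma two_zpow_pos (n : ℤ) : (0:ℝ) < (2:ℝ)^n := zpow_pos (by norm_num) n

lemma ep_lt (γ : Bool) (n k : ℤ) : ep γ n k < ep γ n (k+1) := by
  have := two_zpow_pos n
  unfold ep; push_cast; nlinarith

lemma ep_sub (γ : Bool) (n k : ℤ) : ep γ n (k+1) - ep γ n k = (2:ℝ)^n := by
  unfold ep; push_cast; ring

lemma volume_JJ (γ : Bool) (n k : ℤ) : volume (JJ γ n k) = ENNReal.ofReal ((2:ℝ)^n) := by
  rw [JJ, Real.volume_Icc, ep_sub]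

lemma measurable_JJ (γ : Bool) (n k : ℤ) : MeasurableSet (JJ γ n k) := measurableSet_Icc

lemma exists_mem_Ico_ep (γ : Bool) (n : ℤ) (x : ℝ) :
    ∃ k : ℤ, ep γ n k ≤ x ∧ x < ep γ n (k+1) := by
  have hp := two_zpow_pos n
  set z := x / (2:ℝ)^n - (dd γ n : ℝ)/3 with hz
  refine ⟨⌊z⌋, ?_, ?_⟩
  · have h1 : (⌊z⌋ : ℝ) + (dd γ n : ℝ)/3 ≤ x / (2:ℝ)^n := by
      have := Int.floor_le z; rw [hz] at this; linarith
    calc ep γ n ⌊z⌋ = ((⌊z⌋:ℝ) + (dd γ n : ℝ)/3) * 2^n := rfl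
      _ ≤ (x / 2^n) * 2^n := by nlinarith
      _ = x := div_mul_cancel₀ x (ne_of_gt hp)
  · have h1 : x / (2:ℝ)^n < (⌊z⌋:ℝ) + 1 + (dd γ n:ℝ)/3 := by
      have := Int.lt_floor_add_one z; rw [hz] at this; linarith
    calc x = (x / 2^n) * 2^n := (div_mul_cancel₀ x (ne_of_gt hp)).symm
      _ < ((⌊z⌋:ℝ) + 1 + (dd γ n:ℝ)/3) * 2^n := by nlinarith
      _ = ep γ n (⌊z⌋+1) := by unfold ep; push_cast; ring

lemma exists_mem_JJ (γ : Bool) (n : ℤ) (x : ℝ) : ∃ k : ℤ, x ∈ JJ γ n k := by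
  obtain ⟨k, h1, h2⟩ := exists_mem_Ico_ep γ n x
  exact ⟨k, Set.mem_Icc.mpr ⟨h1, h2.le⟩⟩

/-- parent index -/
def pa (γ : Bool) (p : ℤ × ℤ) : ℤ × ℤ := (p.1 + 1, (p.2 + dd γ p.1) / 2)

lemma JJ_subset_pa (γ : Bool) (p : ℤ × ℤ) : JJ γ p.1 p.2 ⊆ JJ γ (pa γ p).1 (pa γ p).2 := by
  obtain ⟨n, k⟩ := p
  show JJ γ n k ⊆ JJ γ (n+1) ((k + dd γ n)/2)
  set l := (k + dd γ n)/2 with hldef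
  have hl : 2*l ≤ k + dd γ n ∧ k + dd γ n ≤ 2*l + 1 := by omega
  have hds := dd_succ γ n
  have hp := two_zpow_pos n
  have h2 : (2:ℝ)^(n+1) = 2 * (2:ℝ)^n := by
    rw [zpow_add_one₀ (two_ne_zero)]; ring
  apply Set.Icc_subset_Icc
  · show ep γ (n+1) l ≤ ep γ n k
    have hc : 2*(l:ℝ) ≤ (k:ℝ) + (dd γ n : ℝ) := by exact_mod_cast hl.1
    unfold ep
    rw [h2, hds]
    push_cast
    nlinarith
  · show ep γ n (k+1) ≤ ep γ (n+1) (l+1)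
    have hc : (k:ℝ) + (dd γ n : ℝ) ≤ 2*(l:ℝ) + 1 := by exact_mod_cast hl.2
    unfold ep
    rw [h2, hds]
    push_cast
    nlinarith

lemma grid_separation (n k k' : ℤ) : (2:ℝ)^n / 3 ≤ |ep false n k - ep true n k'| := by
  have hp := two_zpow_pos n
  have key : (1:ℝ)/3 ≤ |(k:ℝ) - (k':ℝ) - (dd true n : ℝ)/3| := by
    rcases dd_true_cases n with h | h <;> rw [h]
    · rcases le_or_gt 1 (k - k') with hj | hj
      · rw [le_abs]; left
        have : (1:ℝ) ≤ (k:ℝ) - (k':ℝ) := by exact_mod_cast hj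
        push_cast; linarith
      · rw [le_abs]; right
        have : (k:ℝ) - (k':ℝ) ≤ 0 := by
          have h0 : k - k' ≤ 0 := by omega
          exact_mod_cast h0
        push_cast; linarith
    · rcases le_or_gt 0 (k - k') with hj | hj
      · rw [le_abs]; left
        have : (0:ℝ) ≤ (k:ℝ) - (k':ℝ) := by exact_mod_cast hj
        push_cast; linarith
      · rw [le_abs]; right
        have : (k:ℝ) - (k':ℝ) ≤ -1 := by
          have h0 : k - k' ≤ -1 := by omega
          exact_mod_cast h0
        push_cast; linarith
  have heq : ep false n k - ep true n k' = ((k:ℝ) - (k':ℝ) - (dd true n : ℝ)/3) * 2^n := by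
    have h0 : dd false n = 0 := rfl
    unfold ep
    rw [h0]
    push_cast
    ring
  rw [heq, abs_mul, abs_of_pos hp]
  calc (2:ℝ)^n/3 = (1/3) * 2^n := by ring
    _ ≤ _ := by nlinarith

lemma cover_of_no_gridpoint {γ : Bool} {m : ℤ} {a b : ℝ} (hab : a < b)
    (hng : ∀ k, ep γ m k ∉ Ioo a b) : ∃ k, Icc a b ⊆ JJ γ m k := by
  obtain ⟨k, hk1, hk2⟩ := exists_mem_Ico_ep γ m a
  refine ⟨k, Set.Icc_subset_Icc hk1 ?_⟩
  by_contra hb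
  push_neg at hb
  exact hng (k+1) ⟨hk2, hb⟩

lemma exists_JJ_superset {a b : ℝ} (hab : a < b) :
    ∃ γ n k, Icc a b ⊆ JJ γ n k ∧ (2:ℝ)^n ≤ 6 * (b - a) := by
  obtain ⟨n', hn'⟩ := exists_mem_Ico_zpow (x := 3*(b-a)) (y := (2:ℝ)) (by linarith) one_lt_two
  obtain ⟨h1', h2'⟩ := hn'
  set m := n' + 1 with hm
  have h1 : 3*(b-a) < (2:ℝ)^m := h2'
  have h2 : (2:ℝ)^m ≤ 6*(b-a) := by
    have : (2:ℝ)^m = 2 * (2:ℝ)^n' := by rw [hm, zpow_add_one₀ (two_ne_zero)]; ring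
    rw [this]; linarith
  by_cases hgp : ∃ k0, ep false m k0 ∈ Ioo a b
  · obtain ⟨k0, hk0⟩ := hgp
    have hng : ∀ k, ep true m k ∉ Ioo a b := by
      intro k hk
      have hsep := grid_separation m k0 k
      have habs : |ep false m k0 - ep true m k| < b - a := by
        rw [abs_sub_lt_iff]
        constructor <;> [linarith [hk0.1, hk0.2, hk.1, hk.2]; linarith [hk0.1, hk0.2, hk.1, hk.2]]
      linarith
    obtain ⟨k, hk⟩ := cover_of_no_gridpoint hab hng
    exact ⟨true, m, k, hk, h2⟩
  · push_neg at hgp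
    obtain ⟨k, hk⟩ := cover_of_no_gridpoint hab hgp
    exact ⟨false, m, k, hk, h2⟩

lemma exists_JJ_true_large (x R : ℝ) (hR : 0 < R) :
    ∃ n k, x ∈ JJ true n k ∧ Icc (-R) R ⊆ JJ true n k := by
  obtain ⟨m, hm⟩ := pow_unbounded_of_one_lt (3 * max |x| R) (by norm_num : (1:ℝ) < 2)
  set n : ℤ := 2*(m:ℤ) with hn
  have hEven : Even n := ⟨m, by omega⟩
  have hdd : dd true n = 1 := by simp [dd, hEven]
  have hpow : (2:ℝ)^(m:ℕ) ≤ (2:ℝ)^n := by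
    have h1 : (2:ℝ)^n = (2:ℝ)^(m:ℕ) * (2:ℝ)^(m:ℕ) := by
      rw [hn, show 2*(m:ℤ) = (m:ℤ) + (m:ℤ) from by ring, zpow_add₀ two_ne_zero, zpow_natCast]
    nlinarith [pow_pos (by norm_num : (0:ℝ)<2) m, one_le_pow₀ (by norm_num : (1:ℝ) ≤ 2) (n := m)]
  have hbig : 3 * max |x| R ≤ (2:ℝ)^n := le_trans hm.le hpow
  have hxb : |x| ≤ (2:ℝ)^n/3 := by
    have := le_max_left |x| R; nlinarith
  have hRb : R ≤ (2:ℝ)^n/3 := by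
    have := le_max_right |x| R; nlinarith
  have hepl : ep true n (-1) = -(2/3) * (2:ℝ)^n := by
    unfold ep; rw [hdd]; push_cast; ring
  have hepr : ep true n 0 = (1/3) * (2:ℝ)^n := by
    unfold ep; rw [hdd]; push_cast; ring
  have hJ : JJ true n (-1) = Icc (-(2/3) * (2:ℝ)^n) ((1/3) * (2:ℝ)^n) := by
    rw [JJ, show (-1:ℤ)+1 = 0 from by norm_num, hepl, hepr]
  refine ⟨n, -1, ?_, ?_⟩
  · rw [hJ, Set.mem_Icc]
    have h := abs_le.mp hxb
    constructor
    · nlinarith [h.1, two_zpow_pos n]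
    · nlinarith [h.2, two_zpow_pos n]
  · rw [hJ]
    apply Icc_subset_Icc <;> nlinarith [two_zpow_pos n]


lemma ep_mono (γ : Bool) (n : ℤ) {k k' : ℤ} (hk : k ≤ k') : ep γ n k ≤ ep γ n k' := by
  have hp := two_zpow_pos n
  have hkk : (k:ℝ) ≤ (k':ℝ) := by exact_mod_cast hk
  unfold ep
  nlinarith

lemma JJ_bounded (γ : Bool) (n k : ℤ) : ∃ R, 0 < R ∧ JJ γ n k ⊆ Icc (-R) R := by
  refine ⟨|ep γ n k| + |ep γ n (k+1)| + 1, by positivity, ?_⟩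
  intro x hx
  rw [JJ, Set.mem_Icc] at hx
  rw [Set.mem_Icc]
  constructor
  · have h1 := neg_abs_le (ep γ n k)
    have h2 := abs_nonneg (ep γ n (k+1))
    linarith [hx.1]
  · have h1 := le_abs_self (ep γ n (k+1))
    have h2 := abs_nonneg (ep γ n k)
    linarith [hx.2]

/-- average of `h` on `JJ γ n k` -/
noncomputable def av (γ : Bool) (n k : ℤ) (h : ℝ → ℝ≥0∞) : ℝ≥0∞ :=
  (ENNReal.ofReal ((2:ℝ)^n))⁻¹ * ∫⁻ y in JJ γ n k, h y

lemma av_eq (γ : Bool) (n k : ℤ) (h : ℝ → ℝ≥0∞) :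
    av γ n k h = (ENNReal.ofReal ((2:ℝ)^n))⁻¹ * ∫⁻ y in JJ γ n k, h y := rfl

/-- grid maximal function -/
noncomputable def mg (γ : Bool) (h : ℝ → ℝ≥0∞) (x : ℝ) : ℝ≥0∞ :=
  ⨆ n : ℤ, ⨆ k : ℤ, (JJ γ n k).indicator (fun _ => av γ n k h) x

/-- two-grid maximal operator -/
noncomputable def AA (h : ℝ → ℝ≥0∞) (x : ℝ) : ℝ≥0∞ := mg false h x + mg true h x

lemma measurable_mg (γ : Bool) (h : ℝ → ℝ≥0∞) : Measurable (mg γ h) := by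
  refine Measurable.iSup fun n => Measurable.iSup fun k => ?_
  exact Measurable.indicator measurable_const (measurable_JJ γ n k)

lemma measurable_AA (h : ℝ → ℝ≥0∞) : Measurable (AA h) :=
  (measurable_mg false h).add (measurable_mg true h)

lemma mg_le_AA (γ : Bool) (h : ℝ → ℝ≥0∞) (x : ℝ) : mg γ h x ≤ AA h x := by
  cases γ
  · exact le_add_right le_rfl
  · exact le_add_left le_rfl

lemma av_le_mg {γ : Bool} {n k : ℤ} {x : ℝ} (hx : x ∈ JJ γ n k) (h : ℝ → ℝ≥0∞) :
    av γ n k h ≤ mg γ h x := by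
  have e : (JJ γ n k).indicator (fun _ => av γ n k h) x = av γ n k h := by
    simp [indicator_of_mem hx]
  calc av γ n k h = _ := e.symm
    _ ≤ _ := le_iSup₂ (f := fun n k => (JJ γ n k).indicator (fun _ => av γ n k h) x) n k

lemma av_mono {γ : Bool} {n k : ℤ} {h h' : ℝ → ℝ≥0∞} (hh : ∀ x, h x ≤ h' x) :
    av γ n k h ≤ av γ n k h' :=
  mul_le_mul_right (lintegral_mono fun y => hh y) _

lemma mg_mono {γ : Bool} {h h' : ℝ → ℝ≥0∞} (hh : ∀ x, h x ≤ h' x) (x : ℝ) :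
    mg γ h x ≤ mg γ h' x := by
  refine iSup₂_mono fun n k => ?_
  by_cases hx : x ∈ JJ γ n k <;>
    simp [indicator_of_mem, indicator_of_notMem, hx, av_mono hh]

lemma mg_le_const {γ : Bool} {h : ℝ → ℝ≥0∞} {c : ℝ≥0∞} (hh : ∀ x, h x ≤ c) (x : ℝ) :
    mg γ h x ≤ c := by
  refine iSup₂_le fun n k => ?_
  by_cases hx : x ∈ JJ γ n k
  · rw [indicator_of_mem hx]
    calc av γ n k h ≤ av γ n k (fun _ => c) := av_mono hh
      _ = c := by
        rw [av_eq, setLIntegral_const, volume_JJ, mul_comm c _, ← mul_assoc,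
          ENNReal.inv_mul_cancel (ENNReal.ofReal_pos.mpr (two_zpow_pos n)).ne'
            ENNReal.ofReal_ne_top, one_mul]
  · simp [indicator_of_notMem hx]

lemma av_add (γ : Bool) (n k : ℤ) {h₁ h₂ : ℝ → ℝ≥0∞} (h1 : Measurable h₁) :
    av γ n k (fun x => h₁ x + h₂ x) = av γ n k h₁ + av γ n k h₂ := by
  rw [av_eq, lintegral_add_left h1, mul_add]
  rfl

lemma mg_add_le {h₁ h₂ : ℝ → ℝ≥0∞} (h1 : Measurable h₁) (γ : Bool) (x : ℝ) :
    mg γ (fun x => h₁ x + h₂ x) x ≤ mg γ h₁ x + mg γ h₂ x := by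
  refine iSup₂_le fun n k => ?_
  by_cases hx : x ∈ JJ γ n k
  · rw [indicator_of_mem hx, av_add γ n k h1]
    exact add_le_add (av_le_mg hx _) (av_le_mg hx _)
  · simp [indicator_of_notMem hx]

lemma av_tsum (γ : Bool) (n k : ℤ) {H : ℕ → ℝ → ℝ≥0∞} (hH : ∀ j, Measurable (H j)) :
    av γ n k (fun x => ∑' j, H j x) = ∑' j, av γ n k (H j) := by
  rw [av_eq, lintegral_tsum fun j => (hH j).aemeasurable]
  exact ENNReal.tsum_mul_left.symm

lemma mg_tsum_le {H : ℕ → ℝ → ℝ≥0∞} (hH : ∀ j, Measurable (H j)) (γ : Bool) (x : ℝ) :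
    mg γ (fun x => ∑' j, H j x) x ≤ ∑' j, mg γ (H j) x := by
  refine iSup₂_le fun n k => ?_
  by_cases hx : x ∈ JJ γ n k
  · rw [indicator_of_mem hx, av_tsum γ n k hH]
    exact ENNReal.tsum_le_tsum fun j => av_le_mg hx _
  · simp [indicator_of_notMem hx]

lemma av_const_mul (γ : Bool) (n k : ℤ) {c : ℝ≥0∞} (hc : c ≠ ⊤) (h : ℝ → ℝ≥0∞) :
    av γ n k (fun x => c * h x) = c * av γ n k h := by
  rw [av_eq, lintegral_const_mul' c _ hc, av_eq]
  ring

lemma mg_const_mul_le {c : ℝ≥0∞} (hc : c ≠ ⊤) (h : ℝ → ℝ≥0∞) (γ : Bool) (x : ℝ) :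
    mg γ (fun x => c * h x) x ≤ c * mg γ h x := by
  refine iSup₂_le fun n k => ?_
  by_cases hx : x ∈ JJ γ n k
  · rw [indicator_of_mem hx, av_const_mul γ n k hc]
    exact mul_le_mul_right (av_le_mg hx _) c
  · simp [indicator_of_notMem hx]

lemma mg_true_pos {g : ℝ → ℝ≥0∞} (hg : ∫⁻ x, g x ≠ 0) (x : ℝ) : 0 < mg true g x := by
  have hcov : (⋃ k : ℤ, JJ true 0 k) = univ :=
    eq_univ_iff_forall.mpr (fun y => mem_iUnion.mpr (exists_mem_JJ true 0 y))
  have hex : ∃ k, ∫⁻ y in JJ true 0 k, g y ≠ 0 := by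
    by_contra hc
    push_neg at hc
    apply hg
    have e : ∫⁻ y, g y = ∫⁻ y in ⋃ k : ℤ, JJ true 0 k, g y := by
      rw [hcov, setLIntegral_univ]
    rw [e]
    refine le_antisymm ?_ (zero_le)
    calc ∫⁻ y in ⋃ k : ℤ, JJ true 0 k, g y
        ≤ ∑' k : ℤ, ∫⁻ y in JJ true 0 k, g y := lintegral_iUnion_le _ _
      _ = 0 := by simp [hc]
  obtain ⟨k0, hk0⟩ := hex
  obtain ⟨R0, hR0, hJR⟩ := JJ_bounded true 0 k0
  obtain ⟨n, k, hxJ, hsub⟩ := exists_JJ_true_large x R0 hR0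
  have h1 : 0 < av true n k g := by
    rw [av_eq]
    apply ENNReal.mul_pos
    · exact ENNReal.inv_ne_zero.mpr ENNReal.ofReal_ne_top
    · refine ne_of_gt (lt_of_lt_of_le (pos_iff_ne_zero.mpr hk0) (lintegral_mono_set ?_))
      exact hJR.trans hsub
  exact lt_of_lt_of_le h1 (av_le_mg hxJ g)
lemma pa_fst (γ : Bool) (p : ℤ × ℤ) : (pa γ p).1 = p.1 + 1 := rfl

lemma same_scale (γ : Bool) (n : ℤ) {k k' : ℤ} (hkk : k ≠ k') :
    volume (JJ γ n k ∩ JJ γ n k') = 0 := by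
  have key : ∀ k1 k2 : ℤ, k1 < k2 → volume (JJ γ n k1 ∩ JJ γ n k2) = 0 := by
    intro k1 k2 h12
    rw [JJ, JJ, Set.Icc_inter_Icc, Real.volume_Icc, ENNReal.ofReal_eq_zero]
    have h1 : ep γ n (k1+1) ≤ ep γ n k2 := ep_mono γ n (by omega)
    have h2 := le_max_right (ep γ n k1) (ep γ n k2)
    have h3 := min_le_left (ep γ n (k1+1)) (ep γ n (k2+1))
    linarith
  rcases lt_or_gt_of_ne hkk with hlt | hgt
  · exact key _ _ hlt
  · rw [Set.inter_comm]; exact key _ _ hgt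

theorem mg_weak (γ : Bool) {h : ℝ → ℝ≥0∞} {t : ℝ≥0∞}
    (ht0 : t ≠ 0) (hI : ∫⁻ x, h x ≠ ⊤) :
    t * volume {x | t < mg γ h x} ≤ ∫⁻ x, h x := by
  classical
  rcases eq_or_ne t ⊤ with rfl | htt
  · have hempty : {x : ℝ | ⊤ < mg γ h x} = ∅ := by
      ext x; simp [not_top_lt]
    simp [hempty]
  set I := ∫⁻ x, h x with hIdef
  have hav_le : ∀ n k, av γ n k h ≤ (ENNReal.ofReal ((2:ℝ)^n))⁻¹ * I :=
    fun n k => mul_le_mul_right (setLIntegral_le_lintegral _ _) _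
  obtain ⟨Nn, hNn⟩ := pow_unbounded_of_one_lt (I.toReal / t.toReal) (by norm_num : (1:ℝ) < 2)
  have hlarge : ∀ n k : ℤ, (Nn:ℤ) ≤ n → ¬ (t < av γ n k h) := by
    intro n k hn
    have h2n : I.toReal / t.toReal < (2:ℝ)^n := by
      calc I.toReal / t.toReal < (2:ℝ)^(Nn:ℕ) := hNn
        _ = (2:ℝ)^((Nn:ℕ):ℤ) := (zpow_natCast _ _).symm
        _ ≤ (2:ℝ)^n := zpow_le_zpow_right₀ (by norm_num) hn
    have htpos : 0 < t.toReal := ENNReal.toReal_pos ht0 htt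
    have hIle : I ≤ t * ENNReal.ofReal ((2:ℝ)^n) := by
      rw [← ENNReal.ofReal_toReal hI, ← ENNReal.ofReal_toReal htt,
        ← ENNReal.ofReal_mul (by positivity)]
      apply ENNReal.ofReal_le_ofReal
      rw [div_lt_iff₀ htpos] at h2n
      nlinarith
    apply not_lt.mpr
    calc av γ n k h ≤ (ENNReal.ofReal ((2:ℝ)^n))⁻¹ * I := hav_le n k
      _ ≤ (ENNReal.ofReal ((2:ℝ)^n))⁻¹ * (t * ENNReal.ofReal ((2:ℝ)^n)) :=
          mul_le_mul_right hIle _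
      _ = t * ((ENNReal.ofReal ((2:ℝ)^n))⁻¹ * ENNReal.ofReal ((2:ℝ)^n)) := by ring
      _ = t := by
          rw [ENNReal.inv_mul_cancel (ENNReal.ofReal_pos.mpr (two_zpow_pos n)).ne'
            ENNReal.ofReal_ne_top, mul_one]
  set P : ℤ × ℤ → Prop := fun p => t < av γ p.1 p.2 h with hP
  set anc : ℕ → ℤ × ℤ → ℤ × ℤ := fun j p => (pa γ)^[j] p with hanc
  have anc_fst : ∀ (j : ℕ) (p : ℤ × ℤ), (anc j p).1 = p.1 + j := by
    intro j
    induction j with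
    | zero => intro p; simp [hanc]
    | succ n ih =>
      intro p
      have e : anc (n+1) p = pa γ (anc n p) := by
        simp only [hanc, Function.iterate_succ_apply']
      rw [e, pa_fst, ih p]
      push_cast; ring
  have anc_sub : ∀ (j : ℕ) (p : ℤ × ℤ), JJ γ p.1 p.2 ⊆ JJ γ (anc j p).1 (anc j p).2 := by
    intro j
    induction j with
    | zero => intro p; simp [hanc]
    | succ n ih =>
      intro p
      have e : anc (n+1) p = pa γ (anc n p) := by
        simp only [hanc, Function.iterate_succ_apply']
      rw [e]
      exact (ih p).trans (JJ_subset_pa γ (anc n p))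
  have anc_add : ∀ (i j : ℕ) (p : ℤ × ℤ), anc i (anc j p) = anc (i+j) p := by
    intro i j p
    simp only [hanc]
    exact (Function.iterate_add_apply _ i j p).symm
  set Sel : Set (ℤ × ℤ) := {p | P p ∧ ∀ j:ℕ, 1 ≤ j → ¬ P (anc j p)} with hSel
  have sel_of : ∀ p, P p → ∃ q ∈ Sel, JJ γ p.1 p.2 ⊆ JJ γ q.1 q.2 := by
    intro p hp
    set B := (Nn - p.1).toNat with hB
    have hnP : ∀ j:ℕ, B ≤ j → ¬ P (anc j p) := by
      intro j hj
      have hs : (Nn:ℤ) ≤ (anc j p).1 := by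
        rw [anc_fst]
        have h1 : (Nn : ℤ) - p.1 ≤ (B:ℤ) := Int.self_le_toNat _
        have h2 : (B:ℤ) ≤ (j:ℤ) := by exact_mod_cast hj
        omega
      exact hlarge _ _ hs
    have hP0 : P (anc 0 p) := by simpa [hanc] using hp
    set j0 := Nat.findGreatest (fun j => P (anc j p)) B with hj0
    have hPj0 : P (anc j0 p) := by
      have := Nat.findGreatest_spec (P := fun j => P (anc j p)) (Nat.zero_le B) hP0
      simpa [← hj0] using this
    refine ⟨anc j0 p, ⟨hPj0, ?_⟩, anc_sub j0 p⟩
    intro i hi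
    rw [anc_add]
    rcases le_or_gt (i + j0) B with hle | hgt
    · have := Nat.findGreatest_is_greatest (P := fun j => P (anc j p))
        (k := i + j0) (by omega) hle
      simpa using this
    · exact hnP _ (by omega)
  have hcnt : Sel.Countable := Sel.to_countable
  haveI : Countable ↥Sel := hcnt.to_subtype
  have cover : {x | t < mg γ h x} ⊆ ⋃ p : ↥Sel, JJ γ (p:ℤ×ℤ).1 (p:ℤ×ℤ).2 := by
    intro x hx
    simp only [mem_setOf_eq, mg, lt_iSup_iff] at hx
    obtain ⟨n, k, hnk⟩ := hx
    have hxJ : x ∈ JJ γ n k := by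
      by_contra hxJ
      rw [indicator_of_notMem hxJ] at hnk
      simp at hnk
    rw [indicator_of_mem hxJ] at hnk
    obtain ⟨q, hq, hsub⟩ := sel_of (n, k) hnk
    exact mem_iUnion.mpr ⟨⟨q, hq⟩, hsub hxJ⟩
  have hdisj : ∀ p ∈ Sel, ∀ p' ∈ Sel, p ≠ p' →
      volume (JJ γ p.1 p.2 ∩ JJ γ p'.1 p'.2) = 0 := by
    have aux : ∀ p ∈ Sel, ∀ p' ∈ Sel, p ≠ p' → p.1 ≤ p'.1 →
        volume (JJ γ p.1 p.2 ∩ JJ γ p'.1 p'.2) = 0 := by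
      intro p hp p' hp' hne hle
      set j := (p'.1 - p.1).toNat with hj
      have hjval : (j:ℤ) = p'.1 - p.1 := Int.toNat_of_nonneg (by omega)
      have hq1 : (anc j p).1 = p'.1 := by rw [anc_fst]; omega
      rcases eq_or_ne (anc j p) p' with heq | hneq
      · rcases Nat.eq_zero_or_pos j with hj0 | hjpos
        · exfalso; apply hne; rw [← heq, hj0]; simp [hanc]
        · exact absurd (heq ▸ hp'.1) (hp.2 j hjpos)
      · have hk : (anc j p).2 ≠ p'.2 := by
          intro hc; exact hneq (Prod.ext hq1 hc)
        refine measure_mono_null (inter_subset_inter_left _ (anc_sub j p)) ?_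
        rw [show JJ γ (anc j p).1 (anc j p).2 = JJ γ p'.1 (anc j p).2 from by rw [hq1]]
        exact same_scale γ p'.1 hk
    intro p hp p' hp' hne
    rcases le_or_gt p.1 p'.1 with hle | hlt
    · exact aux p hp p' hp' hne hle
    · rw [Set.inter_comm]; exact aux p' hp' p hp hne.symm hlt.le
  set ν := volume.withDensity h with hν
  have hν_ac : ∀ s : Set ℝ, volume s = 0 → ν s = 0 := by
    intro s hs
    exact (withDensity_absolutelyContinuous volume h) hs
  calc t * volume {x | t < mg γ h x}
      ≤ t * volume (⋃ p : ↥Sel, JJ γ (p:ℤ×ℤ).1 (p:ℤ×ℤ).2) :=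
        mul_le_mul_right (measure_mono cover) t
    _ ≤ t * ∑' p : ↥Sel, volume (JJ γ (p:ℤ×ℤ).1 (p:ℤ×ℤ).2) :=
        mul_le_mul_right (measure_iUnion_le _) t
    _ = ∑' p : ↥Sel, t * volume (JJ γ (p:ℤ×ℤ).1 (p:ℤ×ℤ).2) := ENNReal.tsum_mul_left.symm
    _ ≤ ∑' p : ↥Sel, ν (JJ γ (p:ℤ×ℤ).1 (p:ℤ×ℤ).2) := by
        apply ENNReal.tsum_le_tsum
        intro p
        have hPp : P (p:ℤ×ℤ) := p.2.1
        have hc0 : (ENNReal.ofReal ((2:ℝ)^(p:ℤ×ℤ).1)) ≠ 0 :=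
          (ENNReal.ofReal_pos.mpr (two_zpow_pos _)).ne'
        have hct : (ENNReal.ofReal ((2:ℝ)^(p:ℤ×ℤ).1)) ≠ ⊤ := ENNReal.ofReal_ne_top
        rw [volume_JJ, hν, withDensity_apply _ (measurable_JJ _ _ _)]
        have h1 := mul_le_mul_left (le_of_lt hPp) (ENNReal.ofReal ((2:ℝ)^(p:ℤ×ℤ).1))
        calc t * ENNReal.ofReal ((2:ℝ)^(p:ℤ×ℤ).1)
            ≤ ((ENNReal.ofReal ((2:ℝ)^(p:ℤ×ℤ).1))⁻¹ * ∫⁻ y in JJ γ (p:ℤ×ℤ).1 (p:ℤ×ℤ).2, h y) *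
              ENNReal.ofReal ((2:ℝ)^(p:ℤ×ℤ).1) := h1
          _ = (∫⁻ y in JJ γ (p:ℤ×ℤ).1 (p:ℤ×ℤ).2, h y) *
              ((ENNReal.ofReal ((2:ℝ)^(p:ℤ×ℤ).1))⁻¹ * ENNReal.ofReal ((2:ℝ)^(p:ℤ×ℤ).1)) := by
              ring
          _ = ∫⁻ y in JJ γ (p:ℤ×ℤ).1 (p:ℤ×ℤ).2, h y := by
              rw [ENNReal.inv_mul_cancel hc0 hct, mul_one]
    _ = ν (⋃ p : ↥Sel, JJ γ (p:ℤ×ℤ).1 (p:ℤ×ℤ).2) := by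
        refine (measure_iUnion₀ ?_ ?_).symm
        · intro i j hij
          exact hν_ac _ (hdisj i i.2 j j.2 (fun hc => hij (Subtype.ext hc)))
        · exact fun i => (measurable_JJ _ _ _).nullMeasurableSet
    _ ≤ ν univ := measure_mono (subset_univ _)
    _ = I := by rw [hν, withDensity_apply _ MeasurableSet.univ, Measure.restrict_univ]

lemma ofReal_two_zpow (n : ℤ) : (2:ℝ≥0∞)^n = ENNReal.ofReal ((2:ℝ)^n) := by
  rcases n with m | m
  · rw [Int.ofNat_eq_coe, zpow_natCast, zpow_natCast,
      ENNReal.ofReal_pow (by norm_num : (0:ℝ) ≤ 2)]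
    norm_num
  · rw [zpow_negSucc, zpow_negSucc,
      ENNReal.ofReal_inv_of_pos (by positivity),
      ENNReal.ofReal_pow (by norm_num : (0:ℝ) ≤ 2)]
    norm_num

lemma trunc_le_rpow {τ y : ℝ≥0∞} (hτ0 : τ ≠ 0) (hτt : τ ≠ ⊤) {q : ℝ} (hq : 1 ≤ q) :
    (if τ < y then y else 0) ≤ τ^(1-q) * y^q := by
  split_ifs with hτy
  · have h1 : τ^(q-1) ≤ y^(q-1) := ENNReal.rpow_le_rpow hτy.le (by linarith)
    have h2 : (1:ℝ≥0∞) ≤ τ^(1-q) * y^(q-1) := by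
      calc (1:ℝ≥0∞) = τ^(1-q) * τ^(q-1) := by
            rw [← ENNReal.rpow_add _ _ hτ0 hτt]; norm_num
        _ ≤ τ^(1-q) * y^(q-1) := mul_le_mul_right h1 _
    calc y = 1 * y := (one_mul y).symm
      _ ≤ (τ^(1-q) * y^(q-1)) * y := mul_le_mul_left h2 y
      _ = τ^(1-q) * (y^(q-1) * y^(1:ℝ)) := by rw [ENNReal.rpow_one]; ring
      _ = τ^(1-q) * y^q := by
          rw [← ENNReal.rpow_add_of_nonneg _ _ (by linarith) (by norm_num)]
          norm_num
  · exact zero_le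

lemma real_one_sub {δ : ℝ} (hδ0 : 0 < δ) (hδ1 : δ ≤ 1) : (2:ℝ)^(-δ) ≤ 1 - δ/4 := by
  have hlog : Real.log 2 < 1 := by
    have := Real.log_two_lt_d9; linarith
  have hlog2 : (1:ℝ)/2 < Real.log 2 := by
    have := Real.log_two_gt_d9; linarith
  set u := δ * Real.log 2 with hu
  have hu0 : 0 < u := by positivity
  have hu1 : u ≤ 1 := by nlinarith
  have h1 : (2:ℝ)^(-δ) = Real.exp (-u) := by
    rw [Real.rpow_def_of_pos (by norm_num), hu]; ring_nf
  have h2 : Real.exp (-u) ≤ 1/(1+u) := by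
    rw [Real.exp_neg]
    rw [div_eq_inv_mul, mul_one]
    apply inv_anti₀ (by linarith)
    have := Real.add_one_le_exp u
    linarith
  have h3 : 1/(1+u) ≤ 1 - u/2 := by
    rw [div_le_iff₀ (by linarith)]
    nlinarith
  have h4 : 1 - u/2 ≤ 1 - δ/4 := by nlinarith
  linarith [h1 ▸ h2.trans (h3.trans h4)]

lemma real_geom_sum {δ : ℝ} (hδ0 : 0 < δ) (hδ1 : δ ≤ 1) (M : ℤ) (S : Finset ℤ)
    (hS : ∀ j ∈ S, j ≤ M) :
    ∑ j ∈ S, ((2:ℝ)^j)^δ ≤ ((2:ℝ)^M)^δ * (4/δ) := by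
  set ρ : ℝ := (2:ℝ)^(-δ) with hρ
  have hρ0 : 0 ≤ ρ := Real.rpow_nonneg (by norm_num) _
  have hρ1 : ρ < 1 := by
    have := real_one_sub hδ0 hδ1; linarith
  have key : ∀ j ∈ S, ((2:ℝ)^j)^δ = ((2:ℝ)^M)^δ * ρ^((M-j).toNat) := by
    intro j hj
    have hMj : ((M-j).toNat : ℝ) = (M:ℝ) - (j:ℝ) := by
      have : ((M-j).toNat : ℤ) = M - j := Int.toNat_of_nonneg (by linarith [hS j hj])
      exact_mod_cast this
    have e1 : ((2:ℝ)^j)^δ = (2:ℝ)^((j:ℝ)*δ) := by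
      rw [← Real.rpow_intCast 2 j, ← Real.rpow_mul (by norm_num)]
    have e2 : ((2:ℝ)^M)^δ = (2:ℝ)^((M:ℝ)*δ) := by
      rw [← Real.rpow_intCast 2 M, ← Real.rpow_mul (by norm_num)]
    have e3 : ρ^((M-j).toNat) = (2:ℝ)^(-δ*((M-j).toNat : ℝ)) := by
      rw [hρ, ← Real.rpow_natCast ((2:ℝ)^(-δ)) _, ← Real.rpow_mul (by norm_num)]
    rw [e1, e2, e3, ← Real.rpow_add (by norm_num), hMj]
    ring_nf
  rw [Finset.sum_congr rfl key, ← Finset.mul_sum]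
  apply mul_le_mul_of_nonneg_left _ (Real.rpow_nonneg (by positivity) _)
  -- ∑ j in S, ρ^(M-j).toNat ≤ 4/δ
  obtain ⟨N, hN⟩ := (S.image (fun j => (M-j).toNat)).exists_nat_subset_range
  have hinj : Set.InjOn (fun j => (M-j).toNat) S := by
    intro a ha b hb hab
    have ha' := hS a ha; have hb' := hS b hb
    simp only at hab
    omega
  have h14 : 1 - ρ ≥ δ/4 := by
    have := real_one_sub hδ0 hδ1; rw [hρ]; linarith
  calc ∑ j ∈ S, ρ^((M-j).toNat)
      = ∑ i ∈ S.image (fun j => (M-j).toNat), ρ^i := by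
        rw [Finset.sum_image (fun a ha b hb hab => hinj ha hb hab)]
    _ ≤ ∑ i ∈ Finset.range N, ρ^i := Finset.sum_le_sum_of_subset_of_nonneg hN
        (fun i _ _ => pow_nonneg hρ0 i)
    _ = (1 - ρ^N)/(1 - ρ) := by
        rw [geom_sum_eq (hρ1.ne) N, ← neg_div_neg_eq]; ring_nf
    _ ≤ 4/δ := by
        have hρn : (0:ℝ) ≤ ρ^N := pow_nonneg hρ0 N
        rw [div_le_div_iff₀ (by linarith) hδ0]
        nlinarith

lemma tsum_geom_ennreal {δ : ℝ} (hδ0 : 0 < δ) (hδ1 : δ ≤ 1) (M : ℤ) :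
    ∑' j:ℤ, (if j ≤ M then ENNReal.ofReal (((2:ℝ)^j)^δ) else 0)
      ≤ ENNReal.ofReal (((2:ℝ)^M)^δ * (4/δ)) := by
  classical
  rw [ENNReal.tsum_eq_iSup_sum]
  apply iSup_le
  intro S
  have e : ∑ j ∈ S, (if j ≤ M then ENNReal.ofReal (((2:ℝ)^j)^δ) else 0)
      = ∑ j ∈ S.filter (· ≤ M), ENNReal.ofReal (((2:ℝ)^j)^δ) := by
    rw [Finset.sum_filter]
  rw [e, ← ENNReal.ofReal_sum_of_nonneg
    (fun j _ => Real.rpow_nonneg (le_of_lt (zpow_pos two_pos j)) δ)]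
  apply ENNReal.ofReal_le_ofReal
  exact real_geom_sum hδ0 hδ1 M _ (fun j hj => by
    have := Finset.mem_filter.mp hj; simpa using this.2)

lemma τpow (j : ℤ) (r : ℝ) :
    (ENNReal.ofReal ((2:ℝ)^j))^r = ENNReal.ofReal (((2:ℝ)^j)^r) :=
  ENNReal.ofReal_rpow_of_pos (zpow_pos two_pos j)

theorem mg_strong (γ : Bool) {h : ℝ → ℝ≥0∞} (hm : Measurable h) {q : ℝ}
    (hq1 : 1 < q) (hq2 : q ≤ 2) :
    ∫⁻ x, (mg γ h x) ^ q ≤ ENNReal.ofReal (256 / (q-1)) * ∫⁻ x, h x ^ q := by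
  classical
  set δ := q - 1 with hδ
  have hδ0 : 0 < δ := by linarith
  have hδ1 : δ ≤ 1 := by linarith
  have hq0 : 0 < q := by linarith
  set I := ∫⁻ x, h x ^ q with hI
  rcases eq_or_ne I ⊤ with hItop | hItop
  · rw [hItop, ENNReal.mul_top (by
      simp only [ne_eq, ENNReal.ofReal_eq_zero, not_le]
      positivity)]
    exact le_top
  set τ : ℤ → ℝ≥0∞ := fun j => ENNReal.ofReal ((2:ℝ)^j) with hτ
  have hτ0 : ∀ j, τ j ≠ 0 := fun j => (ENNReal.ofReal_pos.mpr (zpow_pos two_pos j)).ne'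
  have hτt : ∀ j, τ j ≠ ⊤ := fun _ => ENNReal.ofReal_ne_top
  have hτlt : ∀ i j : ℤ, i < j → τ i < τ j := by
    intro i j hij
    exact (ENNReal.ofReal_lt_ofReal_iff (zpow_pos two_pos j)).mpr
      (zpow_lt_zpow_right₀ (by norm_num) hij)
  have hτadd : ∀ j : ℤ, τ (j-2) + τ (j-2) = τ (j-1) := by
    intro j
    rw [hτ]
    simp only
    rw [← ENNReal.ofReal_add (le_of_lt (zpow_pos two_pos _)) (le_of_lt (zpow_pos two_pos _))]
    congr 1
    rw [show (j:ℤ) - 1 = (j - 2) + 1 from by ring, zpow_add_one₀ (two_ne_zero)]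
    ring
  set h1 : ℤ → ℝ → ℝ≥0∞ := fun j x => if τ (j-2) < h x then h x else 0 with hh1
  have h1meas : ∀ j, Measurable (h1 j) :=
    fun j => Measurable.ite (hm measurableSet_Ioi) hm measurable_const
  have h1fin : ∀ j, ∫⁻ x, h1 j x ≤ (τ (j-2))^(1-q) * I := by
    intro j
    calc ∫⁻ x, h1 j x ≤ ∫⁻ x, (τ (j-2))^(1-q) * h x ^ q :=
          lintegral_mono (fun x => trunc_le_rpow (hτ0 _) (hτt _) hq1.le)
      _ = (τ (j-2))^(1-q) * I := lintegral_const_mul' _ _ (by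
          rw [hτ]; simp only
          rw [τpow]; exact ENNReal.ofReal_ne_top)
  have h1fin' : ∀ j, ∫⁻ x, h1 j x ≠ ⊤ := by
    intro j
    refine ne_top_of_le_ne_top ?_ (h1fin j)
    exact ENNReal.mul_ne_top (by rw [hτ]; simp only; rw [τpow]; exact ENNReal.ofReal_ne_top) hItop
  have hF_incl : ∀ j:ℤ, {x | τ (j-1) < mg γ h x} ⊆ {x | τ (j-2) < mg γ (h1 j) x} := by
    intro j x hx
    simp only [mem_setOf_eq] at hx ⊢
    by_contra hc
    push_neg at hc
    have hpt : ∀ y, h y ≤ h1 j y + τ (j-2) := by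
      intro y
      have e : h1 j y = (if τ (j-2) < h y then h y else 0) := rfl
      rw [e]
      by_cases hy : τ (j-2) < h y
      · rw [if_pos hy]; exact le_self_add
      · rw [if_neg hy, zero_add]; exact not_lt.mp hy
    have hb : mg γ h x ≤ τ (j-1) := by
      calc mg γ h x ≤ mg γ (fun y => h1 j y + τ (j-2)) x := mg_mono hpt x
        _ ≤ mg γ (h1 j) x + mg γ (fun _ => τ (j-2)) x := mg_add_le (h1meas j) γ x
        _ ≤ τ (j-2) + τ (j-2) := add_le_add hc (mg_le_const (fun _ => le_rfl) x)
        _ = τ (j-1) := hτadd j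
    exact absurd hx (not_lt.mpr hb)
  have hμ : ∀ j:ℤ, volume {x | τ (j-1) < mg γ h x} ≤ (τ (j-2))⁻¹ * ∫⁻ x, h1 j x := by
    intro j
    have hw := mg_weak γ (hτ0 (j-2)) (h1fin' j)
    calc volume {x | τ (j-1) < mg γ h x}
        ≤ volume {x | τ (j-2) < mg γ (h1 j) x} := measure_mono (hF_incl j)
      _ = (τ (j-2))⁻¹ * (τ (j-2) * volume {x | τ (j-2) < mg γ (h1 j) x}) := by
          rw [← mul_assoc, ENNReal.inv_mul_cancel (hτ0 _) (hτt _), one_mul]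
      _ ≤ (τ (j-2))⁻¹ * ∫⁻ x, h1 j x := mul_le_mul_right hw _
  -- the maximal function is a.e. finite
  have hμtop : volume {x | mg γ h x = ⊤} = 0 := by
    set M := volume {x | mg γ h x = ⊤} with hM
    have hMle : ∀ j:ℤ, M ≤ (τ (j-2))⁻¹ * ((τ (j-2))^(1-q) * I) := by
      intro j
      refine le_trans (measure_mono ?_) ((hμ j).trans (mul_le_mul_right (h1fin j) _))
      intro x hx
      simp only [mem_setOf_eq] at hx ⊢
      rw [hx]
      exact lt_top_iff_ne_top.mpr (hτt _)
    have hcoef : ∀ j:ℤ, (τ (j-2))⁻¹ * (τ (j-2))^(1-q) = ENNReal.ofReal (((2:ℝ)^(j-2))^(-q)) := by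
      intro j
      rw [hτ]; simp only
      rw [τpow, ← ENNReal.ofReal_inv_of_pos (zpow_pos two_pos _),
        ← ENNReal.ofReal_mul (by positivity)]
      congr 1
      rw [← Real.rpow_neg_one ((2:ℝ)^(j-2:ℤ)), ← Real.rpow_add (zpow_pos two_pos _)]
      congr 1
      ring
    by_contra hM0
    have hMfin : M < ⊤ := by
      refine lt_of_le_of_lt (hMle 2) ?_
      rw [← mul_assoc, hcoef]
      exact ENNReal.mul_lt_top ENNReal.ofReal_lt_top (lt_top_iff_ne_top.mpr hItop)
    have hMpos : 0 < M.toReal := ENNReal.toReal_pos hM0 hMfin.ne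
    obtain ⟨n, hn⟩ := pow_unbounded_of_one_lt (I.toReal / M.toReal) (by norm_num : (1:ℝ) < 2)
    have key := hMle ((n:ℤ) + 2)
    rw [← mul_assoc, hcoef] at key
    have e2 : ((2:ℝ)^((n:ℤ) + 2 - 2)) = (2:ℝ)^(n:ℕ) := by
      rw [show (n:ℤ) + 2 - 2 = (n:ℤ) from by ring, zpow_natCast]
    rw [e2] at key
    have h2n1 : (1:ℝ) ≤ (2:ℝ)^(n:ℕ) := one_le_pow₀ (by norm_num)
    have hrq : ((2:ℝ)^(n:ℕ))^(-q) ≤ ((2:ℝ)^(n:ℕ))⁻¹ := by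
      rw [← Real.rpow_neg_one ((2:ℝ)^(n:ℕ))]
      exact Real.rpow_le_rpow_of_exponent_le h2n1 (by linarith)
    have hfinal : M < M := by
      calc M ≤ ENNReal.ofReal (((2:ℝ)^(n:ℕ))^(-q)) * I := key
        _ ≤ ENNReal.ofReal (((2:ℝ)^(n:ℕ))⁻¹) * I := by
            exact mul_le_mul_left (ENNReal.ofReal_le_ofReal hrq) I
        _ = ENNReal.ofReal (((2:ℝ)^(n:ℕ))⁻¹ * I.toReal) := by
            rw [ENNReal.ofReal_mul (by positivity), ENNReal.ofReal_toReal hItop]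
        _ < ENNReal.ofReal (M.toReal) := by
            apply (ENNReal.ofReal_lt_ofReal_iff hMpos).mpr
            rw [div_lt_iff₀ hMpos] at hn
            have hp2 : (0:ℝ) < (2:ℝ)^(n:ℕ) := by positivity
            rw [inv_mul_lt_iff₀ hp2]
            nlinarith
        _ = M := ENNReal.ofReal_toReal hMfin.ne
    exact absurd hfinal (lt_irrefl M)
  -- slabs
  set sl : ℤ → Set ℝ := fun j => {x | τ j ≤ mg γ h x ∧ mg γ h x < τ (j+1)} with hsl
  have hslm : ∀ j, MeasurableSet (sl j) := by
    intro j
    have e : sl j = (mg γ h) ⁻¹' (Ici (τ j)) ∩ (mg γ h) ⁻¹' (Iio (τ (j+1))) := rfl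
    rw [e]
    exact ((measurable_mg γ h) measurableSet_Ici).inter
      ((measurable_mg γ h) measurableSet_Iio)
  have htopm : MeasurableSet {x | mg γ h x = ⊤} :=
    (measurable_mg γ h) (measurableSet_singleton ⊤)
  have hptw : ∀ x, (mg γ h x)^q ≤
      (∑' j:ℤ, (sl j).indicator (fun _ => (τ (j+1))^q) x) +
        ({x | mg γ h x = ⊤}.indicator (fun _ => (⊤:ℝ≥0∞)) x) := by
    intro x
    rcases eq_or_ne (mg γ h x) 0 with hF0 | hF0
    · rw [hF0, ENNReal.zero_rpow_of_pos hq0]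
      exact zero_le
    rcases eq_or_ne (mg γ h x) ⊤ with hFt | hFt
    · have e : ({x' | mg γ h x' = ⊤}.indicator (fun _ => (⊤:ℝ≥0∞)) x) = ⊤ :=
        Set.indicator_of_mem (show x ∈ {x' | mg γ h x' = ⊤} from hFt) (fun _ => (⊤:ℝ≥0∞))
      rw [e, add_top]
      exact le_top
    obtain ⟨j, hj1, hj2⟩ := ENNReal.exists_mem_Ico_zpow hF0 hFt one_lt_two (by norm_num)
    rw [ofReal_two_zpow] at hj1 hj2
    have hxsl : x ∈ sl j := ⟨hj1, hj2⟩
    calc (mg γ h x)^q ≤ (τ (j+1))^q := ENNReal.rpow_le_rpow hj2.le hq0.le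
      _ = (sl j).indicator (fun _ => (τ (j+1))^q) x :=
          (Set.indicator_of_mem hxsl (fun _ => (τ (j+1))^q)).symm
      _ ≤ ∑' j', (sl j').indicator (fun _ => (τ (j'+1))^q) x := ENNReal.le_tsum j
      _ ≤ _ := le_self_add
  -- coefficient identity
  have hcst : ∀ j:ℤ, (τ (j+1))^q * (τ (j-2))⁻¹
      = ENNReal.ofReal ((2:ℝ)^(q+2) * ((2:ℝ)^j)^δ) := by
    intro j
    rw [hτ]; simp only
    rw [τpow, ← ENNReal.ofReal_inv_of_pos (zpow_pos two_pos _),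
      ← ENNReal.ofReal_mul (by positivity)]
    congr 1
    have e1 : ((2:ℝ)^(j+1:ℤ))^q = (2:ℝ)^(((j:ℝ)+1)*q) := by
      rw [← Real.rpow_intCast 2 (j+1), ← Real.rpow_mul (by norm_num)]
      push_cast; ring_nf
    have e2 : ((2:ℝ)^(j-2:ℤ))⁻¹ = (2:ℝ)^(-((j:ℝ)-2)) := by
      rw [← Real.rpow_intCast 2 (j-2), ← Real.rpow_neg (by norm_num)]
      push_cast; ring_nf
    have e3 : ((2:ℝ)^(j:ℤ))^δ = (2:ℝ)^((j:ℝ)*δ) := by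
      rw [← Real.rpow_intCast 2 j, ← Real.rpow_mul (by norm_num)]
    rw [e1, e2, e3, ← Real.rpow_add (by norm_num), ← Real.rpow_add (by norm_num)]
    congr 1
    rw [hδ]; ring
  -- pointwise tsum bound
  have hkey : ∀ x, (∑' j:ℤ, ((τ (j+1))^q * (τ (j-2))⁻¹) * h1 j x)
      ≤ ENNReal.ofReal (256/δ) * h x ^ q := by
    intro x
    rcases eq_or_ne (h x) 0 with hy0 | hy0
    · have hz : ∀ j:ℤ, ((τ (j+1))^q * (τ (j-2))⁻¹) * h1 j x = 0 := by
        intro j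
        have e : h1 j x = (if τ (j-2) < h x then h x else 0) := rfl
        rw [e, hy0]
        simp
      rw [tsum_congr hz]
      simp
    rcases eq_or_ne (h x) ⊤ with hyt | hyt
    · rw [hyt, ENNReal.top_rpow_of_pos hq0, ENNReal.mul_top (by
        simp only [ne_eq, ENNReal.ofReal_eq_zero, not_le]; positivity)]
      exact le_top
    obtain ⟨J, hJ1, hJ2⟩ := ENNReal.exists_mem_Ico_zpow hy0 hyt one_lt_two (by norm_num)
    rw [ofReal_two_zpow] at hJ1 hJ2
    have hterm : ∀ j:ℤ, ((τ (j+1))^q * (τ (j-2))⁻¹) * h1 j x ≤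
        (if j ≤ J+2 then ENNReal.ofReal ((2:ℝ)^(q+2)) * ENNReal.ofReal (((2:ℝ)^j)^δ) else 0)
          * h x := by
      intro j
      have e : h1 j x = (if τ (j-2) < h x then h x else 0) := rfl
      by_cases hact : τ (j-2) < h x
      · -- active: j ≤ J + 2
        have h1x : h1 j x = h x := by rw [e, if_pos hact]
        have hjJ : j ≤ J + 2 := by
          have h1 : τ (j-2) < τ (J+1) := lt_of_lt_of_le hact (le_of_lt hJ2)
          rw [hτ] at h1
          simp only at h1
          have h2 : ((2:ℝ)^(j-2:ℤ)) < ((2:ℝ)^(J+1:ℤ)) :=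
            (ENNReal.ofReal_lt_ofReal_iff (zpow_pos two_pos _)).mp h1
          have h3 : j - 2 < J + 1 := by
            by_contra hcon
            push_neg at hcon
            exact absurd h2 (not_lt.mpr (zpow_le_zpow_right₀ (by norm_num) hcon))
          omega
        rw [h1x, if_pos hjJ, hcst j, ENNReal.ofReal_mul (by positivity)]
      · have h1x : h1 j x = 0 := by rw [e, if_neg hact]
        rw [h1x, mul_zero]
        exact zero_le
    calc (∑' j:ℤ, ((τ (j+1))^q * (τ (j-2))⁻¹) * h1 j x)
        ≤ ∑' j:ℤ, (if j ≤ J+2 then ENNReal.ofReal ((2:ℝ)^(q+2)) *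
            ENNReal.ofReal (((2:ℝ)^j)^δ) else 0) * h x := ENNReal.tsum_le_tsum hterm
      _ = (∑' j:ℤ, (if j ≤ J+2 then ENNReal.ofReal ((2:ℝ)^(q+2)) *
            ENNReal.ofReal (((2:ℝ)^j)^δ) else 0)) * h x := ENNReal.tsum_mul_right
      _ = (ENNReal.ofReal ((2:ℝ)^(q+2)) *
            ∑' j:ℤ, (if j ≤ J+2 then ENNReal.ofReal (((2:ℝ)^j)^δ) else 0)) * h x := by
          congr 1
          rw [← ENNReal.tsum_mul_left]
          apply tsum_congr
          intro j
          split_ifs with hj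
          · rfl
          · rw [mul_zero]
      _ ≤ (ENNReal.ofReal ((2:ℝ)^(q+2)) *
            ENNReal.ofReal (((2:ℝ)^(J+2:ℤ))^δ * (4/δ))) * h x := by
          apply mul_le_mul_left
          exact mul_le_mul_right (tsum_geom_ennreal hδ0 hδ1 (J+2)) _
      _ ≤ (ENNReal.ofReal (256/δ) * ENNReal.ofReal (((2:ℝ)^(J:ℤ))^δ)) * h x := by
          apply mul_le_mul_left
          rw [← ENNReal.ofReal_mul (by positivity), ← ENNReal.ofReal_mul (by positivity)]
          apply ENNReal.ofReal_le_ofReal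
          have e4 : ((2:ℝ)^(J+2:ℤ))^δ = ((2:ℝ)^(J:ℤ))^δ * (4:ℝ)^δ := by
            rw [show (J:ℤ)+2 = J + (2:ℤ) from rfl, zpow_add₀ (two_ne_zero) J 2,
              Real.mul_rpow (le_of_lt (zpow_pos two_pos _)) (by norm_num)]
            norm_num
          have h4δ : (4:ℝ)^δ ≤ 4 := by
            calc (4:ℝ)^δ ≤ (4:ℝ)^(1:ℝ) :=
              Real.rpow_le_rpow_of_exponent_le (by norm_num) hδ1
              _ = 4 := Real.rpow_one 4
          have h2q : (2:ℝ)^(q+2) ≤ 16 := by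
            calc (2:ℝ)^(q+2) ≤ (2:ℝ)^(4:ℝ) :=
              Real.rpow_le_rpow_of_exponent_le (by norm_num) (by linarith)
              _ = 16 := by
                rw [show (4:ℝ) = ((4:ℕ):ℝ) from by norm_num, Real.rpow_natCast]
                norm_num
          have hJpos : (0:ℝ) < ((2:ℝ)^(J:ℤ))^δ := Real.rpow_pos_of_pos (zpow_pos two_pos _) δ
          rw [e4]
          have h4d : 0 < 4/δ := by positivity
          calc (2:ℝ)^(q+2) * (((2:ℝ)^(J:ℤ))^δ * (4:ℝ)^δ * (4/δ))
              ≤ 16 * (((2:ℝ)^(J:ℤ))^δ * 4 * (4/δ)) := by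
                apply mul_le_mul h2q _ (by positivity) (by norm_num)
                apply mul_le_mul_of_nonneg_right _ (le_of_lt h4d)
                exact mul_le_mul_of_nonneg_left h4δ (le_of_lt hJpos)
            _ = 256/δ * ((2:ℝ)^(J:ℤ))^δ := by ring
      _ ≤ ENNReal.ofReal (256/δ) * h x ^ q := by
          rw [mul_assoc]
          apply mul_le_mul_right
          have e5 : ENNReal.ofReal (((2:ℝ)^(J:ℤ))^δ) = (τ J)^δ := by rw [hτ]; simp only [τpow]
          rw [e5]
          calc (τ J)^δ * h x ≤ (h x)^δ * h x :=
              mul_le_mul_left (ENNReal.rpow_le_rpow hJ1 hδ0.le) _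
            _ = (h x)^δ * (h x)^(1:ℝ) := by rw [ENNReal.rpow_one]
            _ = (h x)^q := by
                rw [← ENNReal.rpow_add_of_nonneg _ _ hδ0.le (by norm_num)]
                rw [hδ]; ring_nf
  -- main chain
  calc ∫⁻ x, (mg γ h x)^q
      ≤ ∫⁻ x, ((∑' j:ℤ, (sl j).indicator (fun _ => (τ (j+1))^q) x) +
          ({x | mg γ h x = ⊤}.indicator (fun _ => (⊤:ℝ≥0∞)) x)) := lintegral_mono hptw
    _ = (∫⁻ x, ∑' j:ℤ, (sl j).indicator (fun _ => (τ (j+1))^q) x) +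
        ∫⁻ x, ({x | mg γ h x = ⊤}.indicator (fun _ => (⊤:ℝ≥0∞)) x) := by
        apply lintegral_add_left
        apply Measurable.ennreal_tsum
        intro j
        exact Measurable.indicator measurable_const (hslm j)
    _ = (∑' j:ℤ, (τ (j+1))^q * volume (sl j)) + ⊤ * volume {x | mg γ h x = ⊤} := by
        congr 1
        · rw [lintegral_tsum (fun j =>
            (Measurable.indicator measurable_const (hslm j)).aemeasurable)]
          apply tsum_congr
          intro j
          rw [lintegral_indicator (hslm j), setLIntegral_const]
        · rw [lintegral_indicator htopm, setLIntegral_const]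
    _ = ∑' j:ℤ, (τ (j+1))^q * volume (sl j) := by rw [hμtop, mul_zero, add_zero]
    _ ≤ ∑' j:ℤ, (τ (j+1))^q * ((τ (j-2))⁻¹ * ∫⁻ x, h1 j x) := by
        apply ENNReal.tsum_le_tsum
        intro j
        apply mul_le_mul_right
        refine le_trans (measure_mono ?_) (hμ j)
        intro x hx
        simp only [hsl, mem_setOf_eq] at hx ⊢
        exact lt_of_lt_of_le (hτlt (j-1) j (by omega)) hx.1
    _ = ∑' j:ℤ, ∫⁻ x, ((τ (j+1))^q * (τ (j-2))⁻¹) * h1 j x := by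
        apply tsum_congr
        intro j
        rw [lintegral_const_mul' _ _ (by
          rw [hcst j]; exact ENNReal.ofReal_ne_top), ← mul_assoc]
    _ = ∫⁻ x, ∑' j:ℤ, ((τ (j+1))^q * (τ (j-2))⁻¹) * h1 j x := by
        rw [lintegral_tsum (fun j => ((h1meas j).const_mul _).aemeasurable)]
    _ ≤ ∫⁻ x, ENNReal.ofReal (256/δ) * h x ^ q := lintegral_mono hkey
    _ = ENNReal.ofReal (256/δ) * I := lintegral_const_mul' _ _ ENNReal.ofReal_ne_top



lemma iSup_rpow {u : ℕ → ℝ≥0∞} (hu : Monotone u) {q : ℝ} (hq : 0 < q) :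
    (⨆ n, u n) ^ q = ⨆ n, (u n) ^ q := by
  apply le_antisymm
  · have h1 : Filter.Tendsto u Filter.atTop (nhds (⨆ n, u n)) := tendsto_atTop_iSup hu
    have hc : Continuous (fun x : ℝ≥0∞ => x ^ q) := ENNReal.continuous_rpow_const
    have h2 : Filter.Tendsto (fun n => (u n)^q) Filter.atTop (nhds ((⨆ n, u n)^q)) :=
      (hc.continuousAt).tendsto.comp h1
    exact le_of_tendsto' h2 (fun n => le_iSup (fun n => (u n)^q) n)
  · exact iSup_le fun n => ENNReal.rpow_le_rpow (le_iSup u n) hq.le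

lemma lintegral_tsum_rpow_le {H : ℕ → ℝ → ℝ≥0∞} (hH : ∀ j, Measurable (H j)) {q : ℝ}
    (hq : 1 ≤ q) :
    (∫⁻ x, (∑' j, H j x) ^ q) ^ (1/q) ≤ ∑' j, (∫⁻ x, (H j x) ^ q) ^ (1/q) := by
  have hq0 : 0 < q := lt_of_lt_of_le zero_lt_one hq
  set S : ℕ → ℝ → ℝ≥0∞ := fun N x => ∑ j ∈ Finset.range N, H j x with hS
  have hSmeas : ∀ N, Measurable (S N) := fun N => Finset.measurable_sum _ (fun j _ => hH j)
  have hSmono : ∀ x, Monotone (fun N => S N x) := by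
    intro x a b hab
    exact Finset.sum_le_sum_of_subset (Finset.range_subset_range.mpr hab)
  have htsum : ∀ x, (∑' j, H j x) = ⨆ N, S N x := fun x => ENNReal.tsum_eq_iSup_nat
  have hfin : ∀ N, (∫⁻ x, (S N x)^q)^(1/q) ≤
      ∑ j ∈ Finset.range N, (∫⁻ x, (H j x)^q)^(1/q) := by
    intro N
    induction N with
    | zero =>
      have e : (∫⁻ x, (S 0 x)^q)^(1/q) = 0 := by
        simp only [hS, Finset.range_zero, Finset.sum_empty]
        rw [ENNReal.zero_rpow_of_pos hq0, lintegral_zero,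
          ENNReal.zero_rpow_of_pos (by positivity)]
      rw [e]
      simp
    | succ n ih =>
      have e : ∀ x, S (n+1) x = S n x + H n x := by
        intro x; rw [hS]; exact Finset.sum_range_succ _ n
      calc (∫⁻ x, (S (n+1) x)^q)^(1/q)
          = (∫⁻ x, (S n x + H n x)^q)^(1/q) := by
            congr 1; apply lintegral_congr; intro x; rw [e x]
        _ ≤ (∫⁻ x, (S n x)^q)^(1/q) + (∫⁻ x, (H n x)^q)^(1/q) :=
            ENNReal.lintegral_Lp_add_le (hSmeas n).aemeasurable (hH n).aemeasurable hq
        _ ≤ (∑ j ∈ Finset.range n, (∫⁻ x, (H j x)^q)^(1/q)) + (∫⁻ x, (H n x)^q)^(1/q) :=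
            add_le_add_left ih _
        _ = ∑ j ∈ Finset.range (n+1), (∫⁻ x, (H j x)^q)^(1/q) :=
            (Finset.sum_range_succ _ n).symm
  have hmono2 : Monotone (fun N => ∫⁻ x, (S N x)^q) := by
    intro a b hab
    exact lintegral_mono (fun x => ENNReal.rpow_le_rpow (hSmono x hab) hq0.le)
  calc (∫⁻ x, (∑' j, H j x)^q)^(1/q)
      = (∫⁻ x, ⨆ N, (S N x)^q)^(1/q) := by
        congr 1
        apply lintegral_congr
        intro x
        rw [htsum x, iSup_rpow (hSmono x) hq0]
    _ = (⨆ N, ∫⁻ x, (S N x)^q)^(1/q) := by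
        rw [lintegral_iSup (fun N => (hSmeas N).pow_const q) (fun a b hab x =>
          ENNReal.rpow_le_rpow (hSmono x hab) hq0.le)]
    _ = ⨆ N, (∫⁻ x, (S N x)^q)^(1/q) := iSup_rpow hmono2 (by positivity)
    _ ≤ ⨆ N, ∑ j ∈ Finset.range N, (∫⁻ x, (H j x)^q)^(1/q) := iSup_mono hfin
    _ ≤ ∑' j, (∫⁻ x, (H j x)^q)^(1/q) :=
        iSup_le fun N => ENNReal.sum_le_tsum (Finset.range N)

theorem muck_le {v : ℝ → ℝ≥0∞} (hvm : Measurable v) (hv0 : ∀ x, 0 < v x)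
    (hvt : ∀ x, v x ≠ ⊤) {Λ : ℝ≥0∞} (hΛ0 : Λ ≠ 0) (hΛ : Λ ≠ ⊤) {s : ℝ} (hs : 2 < s)
    (hA : ∀ a b : ℝ, a < b → ∀ x ∈ Icc a b,
      (ENNReal.ofReal (b-a))⁻¹ * ∫⁻ y in Icc a b, v y ≤ Λ * v x) :
    muckenhouptConst (s/2) (fun x => (v x).toReal) ≤ Λ := by
  rw [muckenhouptConst]
  apply iSup_le; intro a; apply iSup_le; intro b; apply iSup_le; intro hab
  have hba : 0 < b - a := by linarith
  set τ : ℝ := 2/(s-2) with hτdef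
  have hs2 : (0:ℝ) < s - 2 := by linarith
  have hτpos : 0 < τ := by rw [hτdef]; positivity
  have hexp : -(1:ℝ)/(s/2-1) = -τ := by
    rw [hτdef]; field_simp
  have hτs : τ * (s/2-1) = 1 := by
    rw [hτdef, show s/2 - 1 = (s-2)/2 from by ring, div_mul_div_comm]
    rw [mul_comm]
    exact div_self (mul_ne_zero hs2.ne' two_ne_zero)
  have hs21 : 0 < s/2 - 1 := by linarith
  have hint1 : ∫⁻ y in Icc a b, ENNReal.ofReal ((fun x => (v x).toReal) y)
      = ∫⁻ y in Icc a b, v y := by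
    apply lintegral_congr
    intro y
    simp [ENNReal.ofReal_toReal (hvt y)]
  have hvyt : ∀ y, (v y)^(-τ) ≠ ⊤ := by
    intro y
    rw [ENNReal.rpow_neg]
    simp only [ne_eq, ENNReal.inv_eq_top]
    exact fun hc => absurd hc (ENNReal.rpow_pos (hv0 y) (hvt y)).ne'
  have hint2 : ∀ y, ENNReal.ofReal (((fun x => (v x).toReal) y) ^ (-(1:ℝ)/(s/2-1)))
      = (v y)^(-τ) := by
    intro y
    simp only
    rw [hexp, ENNReal.toReal_rpow, ENNReal.ofReal_toReal (hvyt y)]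
  set α := (ENNReal.ofReal (b-a))⁻¹ * ∫⁻ y in Icc a b, v y with hα
  have hα_le : ∀ x ∈ Icc a b, α ≤ Λ * v x := hA a b hab
  have hαt : α ≠ ⊤ :=
    ne_top_of_le_ne_top (ENNReal.mul_ne_top hΛ (hvt a)) (hα_le a ⟨le_refl a, hab.le⟩)
  have hα0 : α ≠ 0 := by
    rw [hα]
    apply ne_of_gt
    apply ENNReal.mul_pos
    · simp only [ne_eq, ENNReal.inv_eq_zero]
      exact ENNReal.ofReal_ne_top
    · have hsupp : Function.support v = univ := by
        ext y; simp [Function.support, (hv0 y).ne']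
      have := (lintegral_pos_iff_support hvm (μ := volume.restrict (Icc a b))).mpr ?_
      · exact this.ne'
      · rw [hsupp, Measure.restrict_apply_univ, Real.volume_Icc]
        exact ENNReal.ofReal_pos.mpr hba
  -- pointwise lower bound for v on the interval
  have hlow : ∀ x ∈ Icc a b, Λ⁻¹ * α ≤ v x := by
    intro x hx
    calc Λ⁻¹ * α ≤ Λ⁻¹ * (Λ * v x) := mul_le_mul_right (hα_le x hx) _
      _ = (Λ⁻¹ * Λ) * v x := (mul_assoc _ _ _).symm
      _ = v x := by rw [ENNReal.inv_mul_cancel hΛ0 hΛ, one_mul]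
  have hptneg : ∀ x ∈ Icc a b, (v x)^(-τ) ≤ Λ^τ * α^(-τ) := by
    intro x hx
    have h1 : (Λ⁻¹ * α)^τ ≤ (v x)^τ := ENNReal.rpow_le_rpow (hlow x hx) hτpos.le
    calc (v x)^(-τ) = ((v x)^τ)⁻¹ := ENNReal.rpow_neg _ _
      _ ≤ ((Λ⁻¹ * α)^τ)⁻¹ := ENNReal.inv_le_inv.mpr h1
      _ = ((Λ⁻¹)^τ * α^τ)⁻¹ := by
          rw [ENNReal.mul_rpow_of_nonneg _ _ hτpos.le]
      _ = ((Λ⁻¹)^τ)⁻¹ * (α^τ)⁻¹ := by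
          have h1 : (Λ⁻¹:ℝ≥0∞)^τ ≠ 0 := by
            intro hc
            rw [ENNReal.rpow_eq_zero_iff] at hc
            rcases hc with ⟨hc,-⟩|⟨hc,-⟩
            · exact (ENNReal.inv_ne_zero.mpr hΛ) hc
            · exact (ENNReal.inv_ne_top.mpr hΛ0) hc
          have h2 : α^τ ≠ 0 := by
            intro hc
            rw [ENNReal.rpow_eq_zero_iff] at hc
            rcases hc with ⟨hc,-⟩|⟨hc,-⟩
            · exact hα0 hc
            · exact hαt hc
          rw [ENNReal.mul_inv (Or.inl h1) (Or.inr h2)]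
      _ = Λ^τ * α^(-τ) := by
          rw [ENNReal.inv_rpow, inv_inv, ENNReal.rpow_neg]
  -- bound the second average
  have hsecond : (ENNReal.ofReal (b-a))⁻¹ * ∫⁻ y in Icc a b, (v y)^(-τ)
      ≤ Λ^τ * α^(-τ) := by
    calc (ENNReal.ofReal (b-a))⁻¹ * ∫⁻ y in Icc a b, (v y)^(-τ)
        ≤ (ENNReal.ofReal (b-a))⁻¹ * ∫⁻ _ in Icc a b, Λ^τ * α^(-τ) := by
          apply mul_le_mul_right
          apply setLIntegral_mono' measurableSet_Icc
          intro x hx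
          exact hptneg x hx
      _ = (ENNReal.ofReal (b-a))⁻¹ * ((Λ^τ * α^(-τ)) * ENNReal.ofReal (b-a)) := by
          rw [setLIntegral_const, Real.volume_Icc]
      _ = (Λ^τ * α^(-τ)) * ((ENNReal.ofReal (b-a))⁻¹ * ENNReal.ofReal (b-a)) := by ring
      _ = Λ^τ * α^(-τ) := by
          rw [ENNReal.inv_mul_cancel (ENNReal.ofReal_pos.mpr hba).ne' ENNReal.ofReal_ne_top,
            mul_one]
  -- conclude
  have hΛτt : Λ^τ ≠ ⊤ := ENNReal.rpow_ne_top_of_nonneg hτpos.le hΛ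
  have hατt : α^(-τ) ≠ ⊤ := by
    rw [ENNReal.rpow_neg]
    simp only [ne_eq, ENNReal.inv_eq_top]
    exact fun hc => absurd hc (ENNReal.rpow_pos (pos_iff_ne_zero.mpr hα0) hαt).ne'
  calc ((ENNReal.ofReal (b - a))⁻¹ * ∫⁻ y in Icc a b,
          ENNReal.ofReal ((fun x => (v x).toReal) y)) *
        ((ENNReal.ofReal (b - a))⁻¹ *
          ∫⁻ y in Icc a b,
            ENNReal.ofReal (((fun x => (v x).toReal) y) ^ (-(1:ℝ) / (s/2 - 1)))) ^ (s/2 - 1)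
      = α * ((ENNReal.ofReal (b-a))⁻¹ * ∫⁻ y in Icc a b, (v y)^(-τ)) ^ (s/2-1) := by
        rw [hint1, lintegral_congr hint2]
    _ ≤ α * (Λ^τ * α^(-τ)) ^ (s/2-1) := by
        apply mul_le_mul_right
        exact ENNReal.rpow_le_rpow hsecond hs21.le
    _ = α * (Λ * α⁻¹) := by
        congr 1
        rw [ENNReal.mul_rpow_of_ne_top hΛτt hατt, ← ENNReal.rpow_mul, ← ENNReal.rpow_mul, hτs]
        rw [show -τ * (s/2-1) = -(τ * (s/2-1)) from by ring, hτs, ENNReal.rpow_one,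
          ENNReal.rpow_neg, ENNReal.rpow_one]
    _ = Λ * (α * α⁻¹) := by ring
    _ = Λ := by rw [ENNReal.mul_inv_cancel hα0 hαt, mul_one]


end RdF

set_option maxHeartbeats 2000000 in
open RdF in
/-- Sharpness via unweighted growth (Frey–Nieraeth / Luque–Pérez–Rela): if `T` is bounded
on `L^p` for all `p > 2`, the unweighted norms grow at least linearly
(`‖T‖_{L^p→L^p} ≥ c p` for large `p`), and `T` satisfies the weighted bound
`‖T‖_{L^s(w)} ≤ C [w]_{A_{s/2}}^β` for all `w ∈ A_{s/2}`, then `β ≥ 1`. -/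
theorem weighted_exponent_lower_bound
    (s : ℝ) (hs : 2 < s) (T : (ℝ → ℂ) → ℝ → ℂ) (β : ℝ) (hβ : 0 ≤ β)
    (C : ℝ) (hC : 0 < C) (c P0 : ℝ) (hc : 0 < c)
    (hbdd : ∀ p : ℝ, 2 < p → ∃ Cp : ℝ, ∀ f : ℝ → ℂ,
      eLpNorm (T f) (ENNReal.ofReal p) volume
        ≤ ENNReal.ofReal Cp * eLpNorm f (ENNReal.ofReal p) volume)
    (hlow : ∀ p : ℝ, P0 ≤ p → ∀ C' : ℝ,
      (∀ f : ℝ → ℂ, eLpNorm (T f) (ENNReal.ofReal p) volume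
        ≤ ENNReal.ofReal C' * eLpNorm f (ENNReal.ofReal p) volume) → c * p ≤ C')
    (hup : ∀ w : ℝ → ℝ, (∀ x, 0 < w x) → Measurable w → muckenhouptConst (s / 2) w ≠ ⊤ →
      ∀ f : ℝ → ℂ, weightedNorm s w (T f)
        ≤ ENNReal.ofReal C * muckenhouptConst (s / 2) w ^ β * weightedNorm s w f) :
    1 ≤ β := by
  by_contra hβ1
  push_neg at hβ1
  have h1β : 0 < 1 - β := by linarith
  -- choose the exponent p
  set Y : ℝ := (6144*C/c + 1)^(1/(1-β)) with hY
  have hY1 : 1 < 6144*C/c + 1 := by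
    have : 0 < 6144*C/c := by positivity
    linarith
  have hY0 : 0 < Y := by rw [hY]; positivity
  set p : ℝ := max (max P0 (2*s+1)) (Y+1) with hp
  have hpP0 : P0 ≤ p := le_trans (le_max_left _ _) (le_max_left _ _)
  have hp2s : 2*s ≤ p := by
    have := le_trans (le_max_right P0 (2*s+1)) (le_max_left _ (Y+1))
    linarith
  have hps : s < p := by linarith
  have hp2 : 2 < p := by linarith
  have hp0 : 0 < p := by linarith
  have hpY : Y ≤ p := by
    have := le_max_right (max P0 (2*s+1)) (Y+1)
    linarith
  have hpss : 0 < p - s := by linarith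
  -- conjugate exponents
  set q : ℝ := p/(p-s) with hq
  have hq1 : 1 < q := by
    rw [hq]
    rw [one_lt_div hpss]
    linarith
  have hq0 : 0 < q := by linarith
  have hq2 : q ≤ 2 := by
    rw [hq, div_le_iff₀ hpss]
    linarith
  have hqinv : 1/q = (p-s)/p := by
    rw [hq, one_div_div]
  have hqm1 : q - 1 = s/(p-s) := by
    rw [hq]
    field_simp
    ring
  have hconj : (p/s).HolderConjugate q := by
    rw [Real.holderConjugate_iff]
    constructor
    · rw [one_lt_div (by linarith : (0:ℝ) < s)]; exact hps
    · rw [hq]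
      have hs0 : s ≠ 0 := by linarith
      have hp0' : p ≠ 0 := by linarith
      field_simp
      ring
  -- constants
  set K : ℝ≥0∞ := ENNReal.ofReal (256*p) with hK
  have hK0 : K ≠ 0 := by
    rw [hK]; exact (ENNReal.ofReal_pos.mpr (by positivity)).ne'
  have hKt : K ≠ ⊤ := ENNReal.ofReal_ne_top
  have hK1 : 1 ≤ K := by
    rw [hK]
    exact ENNReal.one_le_ofReal.mpr (by nlinarith)
  have h2K0 : (2*K) ≠ 0 := by
    simp only [ne_eq, mul_eq_zero, not_or]
    exact ⟨two_ne_zero, hK0⟩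
  have h2Kt : (2*K) ≠ ⊤ := ENNReal.mul_ne_top (by norm_num) hKt
  set ΛE : ℝ≥0∞ := 12 * K with hΛE
  have hΛE0 : ΛE ≠ 0 := by
    simp only [hΛE, ne_eq, mul_eq_zero, not_or]
    exact ⟨by norm_num, hK0⟩
  have hΛEt : ΛE ≠ ⊤ := ENNReal.mul_ne_top (by norm_num) hKt
  set C' : ℝ := 2*C*(3072*p)^β with hC'
  have hC'0 : 0 < C' := by
    rw [hC']
    have : (0:ℝ) < (3072*p)^β := Real.rpow_pos_of_pos (by positivity) β
    positivity
  -- eLpNorm identification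
  have hLp : ∀ g : ℝ → ℂ, eLpNorm g (ENNReal.ofReal p) volume
      = (∫⁻ x, (‖g x‖₊ : ℝ≥0∞)^p) ^ (1/p) := by
    intro g
    rw [eLpNorm_eq_lintegral_rpow_enorm_toReal (by
        simp only [ne_eq, ENNReal.ofReal_eq_zero, not_le]; exact hp0)
      ENNReal.ofReal_ne_top, ENNReal.toReal_ofReal hp0.le]
    simp only [enorm_eq_nnnorm]
  -- the key operator-norm bound at exponent p
  have key : ∀ f : ℝ → ℂ, eLpNorm (T f) (ENNReal.ofReal p) volume
      ≤ ENNReal.ofReal C' * eLpNorm f (ENNReal.ofReal p) volume := by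
    intro f
    set B := eLpNorm (T f) (ENNReal.ofReal p) volume with hB
    set F := eLpNorm f (ENNReal.ofReal p) volume with hF
    rcases eq_or_ne F ⊤ with hFt | hFt
    · rw [hFt, ENNReal.mul_top (by
        simp only [ne_eq, ENNReal.ofReal_eq_zero, not_le]; exact hC'0)]
      exact le_top
    rcases eq_or_ne B 0 with hB0 | hB0
    · rw [hB0]; exact zero_le
    obtain ⟨Cp, hCp⟩ := hbdd p hp2
    have hBt : B ≠ ⊤ := by
      refine ne_top_of_le_ne_top ?_ (hCp f)
      exact ENNReal.mul_ne_top ENNReal.ofReal_ne_top hFt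
    set Ip := ∫⁻ x, (‖T f x‖₊ : ℝ≥0∞)^p with hIp
    set Fp := ∫⁻ x, (‖f x‖₊ : ℝ≥0∞)^p with hFp
    have hBIp : B = Ip^(1/p) := hLp (T f)
    have hFFp : F = Fp^(1/p) := hLp f
    have hIp0 : Ip ≠ 0 := by
      intro hcon
      apply hB0
      rw [hBIp, hcon, ENNReal.zero_rpow_of_pos (by positivity)]
    have hIpt : Ip ≠ ⊤ := by
      intro hcon
      apply hBt
      rw [hBIp, hcon, ENNReal.top_rpow_of_pos (by positivity)]
    -- measurable minorant
    obtain ⟨φ, hφm, hφle, hφeq⟩ :=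
      exists_measurable_le_lintegral_eq volume (fun x => (‖T f x‖₊ : ℝ≥0∞)^p)
    have hφint : ∫⁻ x, φ x = Ip := hφeq.symm
    set g : ℝ → ℝ≥0∞ := fun x => (φ x)^(1/q) with hg
    have hgm : Measurable g := hφm.pow_const _
    have hgq : ∀ x, (g x)^q = φ x := by
      intro x
      rw [hg]
      rw [← ENNReal.rpow_mul, one_div, inv_mul_cancel₀ hq0.ne', ENNReal.rpow_one]
    have hgint : ∫⁻ x, (g x)^q = Ip := by
      rw [lintegral_congr hgq, hφint]
    have hgpos : ∫⁻ x, g x ≠ 0 := by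
      intro hcon
      rw [lintegral_eq_zero_iff hgm] at hcon
      apply hIp0
      rw [← hgint]
      rw [lintegral_eq_zero_iff (hgm.pow_const q)]
      filter_upwards [hcon] with x hx
      simp only [Pi.zero_apply] at hx ⊢
      rw [hx, ENNReal.zero_rpow_of_pos hq0]
    -- Rubio de Francia iteration
    set it : ℕ → ℝ → ℝ≥0∞ := fun j => AA^[j] g with hit
    have hit0 : it 0 = g := rfl
    have hitsucc : ∀ j, it (j+1) = AA (it j) := by
      intro j
      rw [hit]
      exact Function.iterate_succ_apply' AA j g
    have hitm : ∀ j, Measurable (it j) := by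
      intro j
      induction j with
      | zero => exact hgm
      | succ n ih => rw [hitsucc]; exact measurable_AA _
    set Nq : (ℝ → ℝ≥0∞) → ℝ≥0∞ := fun h => (∫⁻ x, h x ^ q)^(1/q) with hNq
    -- strong type for AA
    have hNA : ∀ h : ℝ → ℝ≥0∞, Measurable h → Nq (AA h) ≤ K * Nq h := by
      intro h hm
      have hM1 : (1:ℝ) ≤ 256*(p-s)/s := by
        rw [le_div_iff₀ (by linarith : (0:ℝ) < s)]
        nlinarith
      have hgrid : ∀ γ : Bool, Nq (mg γ h) ≤ ENNReal.ofReal (256*(p-s)/s) * Nq h := by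
        intro γ
        have h256 : (256:ℝ)/(q-1) = 256*(p-s)/s := by
          rw [hqm1]
          field_simp
        have h1 : ∫⁻ x, (mg γ h x)^q ≤ ENNReal.ofReal (256*(p-s)/s) * ∫⁻ x, h x ^ q := by
          rw [← h256]
          exact mg_strong γ hm hq1 hq2
        calc Nq (mg γ h) = (∫⁻ x, (mg γ h x)^q)^(1/q) := rfl
          _ ≤ (ENNReal.ofReal (256*(p-s)/s) * ∫⁻ x, h x ^ q)^(1/q) :=
              ENNReal.rpow_le_rpow h1 (by positivity)
          _ = (ENNReal.ofReal (256*(p-s)/s))^(1/q) * Nq h := by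
              rw [ENNReal.mul_rpow_of_nonneg _ _ (by positivity)]
          _ ≤ ENNReal.ofReal (256*(p-s)/s) * Nq h := by
              apply mul_le_mul_left
              calc (ENNReal.ofReal (256*(p-s)/s))^(1/q)
                  ≤ (ENNReal.ofReal (256*(p-s)/s))^(1:ℝ) := by
                    apply ENNReal.rpow_le_rpow_of_exponent_le
                    · exact ENNReal.one_le_ofReal.mpr hM1
                    · rw [div_le_one hq0]; linarith
                _ = ENNReal.ofReal (256*(p-s)/s) := ENNReal.rpow_one _
      have hsum : Nq (AA h) ≤ Nq (mg false h) + Nq (mg true h) := by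
        rw [hNq]
        exact ENNReal.lintegral_Lp_add_le (measurable_mg false h).aemeasurable
          (measurable_mg true h).aemeasurable hq1.le
      calc Nq (AA h) ≤ Nq (mg false h) + Nq (mg true h) := hsum
        _ ≤ ENNReal.ofReal (256*(p-s)/s) * Nq h + ENNReal.ofReal (256*(p-s)/s) * Nq h :=
            add_le_add (hgrid false) (hgrid true)
        _ = ENNReal.ofReal (512*(p-s)/s) * Nq h := by
            rw [← add_mul, ← ENNReal.ofReal_add (by positivity) (by positivity)]
            congr 2
            ring
        _ ≤ K * Nq h := by
            apply mul_le_mul_left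
            rw [hK]
            apply ENNReal.ofReal_le_ofReal
            rw [div_le_iff₀ (by linarith : (0:ℝ) < s)]
            nlinarith
    have hitN : ∀ j, Nq (it j) ≤ K^j * Nq g := by
      intro j
      induction j with
      | zero => rw [hit0, pow_zero, one_mul]
      | succ n ih =>
        rw [hitsucc]
        calc Nq (AA (it n)) ≤ K * Nq (it n) := hNA _ (hitm n)
          _ ≤ K * (K^n * Nq g) := mul_le_mul_right ih K
          _ = K^(n+1) * Nq g := by rw [← mul_assoc, ← pow_succ']
    -- the weight
    set w : ℝ → ℝ≥0∞ := fun x => ∑' j : ℕ, ((2*K)⁻¹)^j * it j x with hw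
    have hwm : Measurable w := Measurable.ennreal_tsum (fun j => (hitm j).const_mul _)
    have hcjt : ∀ j : ℕ, ((2*K)⁻¹ : ℝ≥0∞)^j ≠ ⊤ :=
      fun j => ENNReal.pow_ne_top (ENNReal.inv_ne_top.mpr h2K0)
    have hwge : ∀ x, g x ≤ w x := by
      intro x
      have := ENNReal.le_tsum (f := fun j : ℕ => ((2*K)⁻¹)^j * it j x) 0
      simpa [hit0] using this
    have hAw : ∀ x, AA w x ≤ (2*K) * w x := by
      intro x
      have hgr : ∀ γ : Bool, mg γ w x ≤ ∑' j : ℕ, ((2*K)⁻¹)^j * mg γ (it j) x := by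
        intro γ
        calc mg γ w x ≤ ∑' j : ℕ, mg γ (fun y => ((2*K)⁻¹)^j * it j y) x :=
            mg_tsum_le (fun j => (hitm j).const_mul _) γ x
          _ ≤ ∑' j : ℕ, ((2*K)⁻¹)^j * mg γ (it j) x :=
            ENNReal.tsum_le_tsum (fun j => mg_const_mul_le (hcjt j) _ γ x)
      calc AA w x = mg false w x + mg true w x := rfl
        _ ≤ (∑' j : ℕ, ((2*K)⁻¹)^j * mg false (it j) x) +
            ∑' j : ℕ, ((2*K)⁻¹)^j * mg true (it j) x := add_le_add (hgr false) (hgr true)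
        _ = ∑' j : ℕ, ((2*K)⁻¹)^j * (mg false (it j) x + mg true (it j) x) := by
            rw [← ENNReal.tsum_add]
            apply tsum_congr
            intro j
            ring
        _ = ∑' j : ℕ, ((2*K)⁻¹)^j * AA (it j) x := rfl
        _ = ∑' j : ℕ, (2*K) * (((2*K)⁻¹)^(j+1) * it (j+1) x) := by
            have hcK : ∀ j:ℕ, ((2*K)⁻¹:ℝ≥0∞)^j = (2*K) * ((2*K)⁻¹)^(j+1) := by
              intro j
              rw [pow_succ', ← mul_assoc, ENNReal.mul_inv_cancel h2K0 h2Kt, one_mul]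
            apply tsum_congr
            intro j
            rw [hitsucc j, ← mul_assoc, ← hcK j]
        _ = (2*K) * ∑' j : ℕ, ((2*K)⁻¹)^(j+1) * it (j+1) x := ENNReal.tsum_mul_left
        _ ≤ (2*K) * ∑' j : ℕ, ((2*K)⁻¹)^j * it j x := by
            apply mul_le_mul_right
            exact Summable.tsum_le_tsum_of_inj (fun j => j+1) (add_left_injective 1)
              (fun c _ => zero_le) (fun j => le_rfl)
              ENNReal.summable ENNReal.summable
        _ = (2*K) * w x := rfl
    have hwN : Nq w ≤ 2 * Ip^(1/q) := by
      have h1 : Nq w ≤ ∑' j : ℕ, Nq (fun x => ((2*K)⁻¹)^j * it j x) :=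
        lintegral_tsum_rpow_le (fun j => (hitm j).const_mul _) hq1.le
      have h2 : ∀ j : ℕ, Nq (fun x => ((2*K)⁻¹)^j * it j x)
          = ((2*K)⁻¹)^j * Nq (it j) := by
        intro j
        rw [hNq]
        simp only
        have e : ∀ x, (((2*K)⁻¹ : ℝ≥0∞)^j * it j x)^q
            = (((2*K)⁻¹ : ℝ≥0∞)^j)^q * (it j x)^q := by
          intro x
          rw [ENNReal.mul_rpow_of_nonneg _ _ hq0.le]
        rw [lintegral_congr e, lintegral_const_mul' _ _
          (ENNReal.rpow_ne_top_of_nonneg hq0.le (hcjt j)),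
          ENNReal.mul_rpow_of_nonneg _ _ (by positivity),
          ← ENNReal.rpow_mul, mul_one_div_cancel hq0.ne', ENNReal.rpow_one]
      calc Nq w ≤ ∑' j : ℕ, Nq (fun x => ((2*K)⁻¹)^j * it j x) := h1
        _ = ∑' j : ℕ, ((2*K)⁻¹)^j * Nq (it j) := by
            exact tsum_congr h2
        _ ≤ ∑' j : ℕ, ((2*K)⁻¹)^j * (K^j * Nq g) :=
            ENNReal.tsum_le_tsum (fun j => mul_le_mul_right (hitN j) _)
        _ = ∑' j : ℕ, ((2:ℝ≥0∞)⁻¹)^j * Nq g := by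
            apply tsum_congr
            intro j
            rw [← mul_assoc, ← mul_pow]
            congr 2
            rw [ENNReal.mul_inv (Or.inr hKt) (Or.inr hK0), mul_assoc,
              ENNReal.inv_mul_cancel hK0 hKt, mul_one]
        _ = (∑' j : ℕ, ((2:ℝ≥0∞)⁻¹)^j) * Nq g := ENNReal.tsum_mul_right
        _ = 2 * Nq g := by
            rw [ENNReal.tsum_geometric, ENNReal.one_sub_inv_two, inv_inv]
        _ = 2 * Ip^(1/q) := by
            rw [hNq]
            simp only
            rw [hgint]
    -- positivity of w
    have hwpos : ∀ x, 0 < w x := by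
      intro x
      have h1 : 0 < mg true g x := mg_true_pos hgpos x
      have h2 : ((2*K)⁻¹)^1 * it 1 x ≤ w x :=
        ENNReal.le_tsum (f := fun j : ℕ => ((2*K)⁻¹)^j * it j x) 1
      have h3 : 0 < ((2*K)⁻¹)^1 * it 1 x := by
        apply ENNReal.mul_pos
        · simp only [pow_one, ne_eq, ENNReal.inv_eq_zero]
          exact h2Kt
        · have : mg true g x ≤ it 1 x := by
            rw [hitsucc 0, hit0]
            exact mg_le_AA true g x
          exact (lt_of_lt_of_le h1 this).ne'
      exact lt_of_lt_of_le h3 h2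
    -- truncated weights and the weighted estimate
    have hbound : ∀ n : ℕ,
        ∫⁻ x, (φ x)^(s/p) * min (g x) (ENNReal.ofReal (n+1))
          ≤ ((ENNReal.ofReal C * ΛE^β)^s) * (Fp^(s/p) * (2 * Ip^(1/q))) := by
      intro n
      set wn : ℝ → ℝ≥0∞ := fun x => min (w x) (ENNReal.ofReal (n+1)) with hwn
      have hwnm : Measurable wn := hwm.min measurable_const
      have hwnpos : ∀ x, 0 < wn x :=
        fun x => lt_min (hwpos x) (ENNReal.ofReal_pos.mpr (by positivity))
      have hwnt : ∀ x, wn x ≠ ⊤ :=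
        fun x => ne_top_of_le_ne_top ENNReal.ofReal_ne_top (min_le_right _ _)
      have hAwn : ∀ x, AA wn x ≤ (2*K) * wn x := by
        intro x
        rcases le_total (w x) (ENNReal.ofReal (n+1)) with hle | hle
        · have e : wn x = w x := min_eq_left hle
          rw [e]
          calc AA wn x ≤ AA w x :=
              add_le_add (mg_mono (fun y => min_le_left _ _) x)
                (mg_mono (fun y => min_le_left _ _) x)
            _ ≤ (2*K) * w x := hAw x
        · have e : wn x = ENNReal.ofReal (n+1) := min_eq_right hle
          rw [e]
          calc AA wn x ≤ ENNReal.ofReal (n+1) + ENNReal.ofReal (n+1) :=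
              add_le_add (mg_le_const (fun y => min_le_right _ _) x)
                (mg_le_const (fun y => min_le_right _ _) x)
            _ = 2 * ENNReal.ofReal (n+1) := (two_mul _).symm
            _ ≤ (2*K) * ENNReal.ofReal (n+1) := by
                apply mul_le_mul_left
                calc (2:ℝ≥0∞) = 2 * 1 := (mul_one 2).symm
                  _ ≤ 2 * K := mul_le_mul_right hK1 2
      have hA1 : ∀ a b : ℝ, a < b → ∀ x ∈ Icc a b,
          (ENNReal.ofReal (b-a))⁻¹ * ∫⁻ y in Icc a b, wn y ≤ ΛE * wn x := by
        intro a b hab x hx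
        obtain ⟨γ, m, k, hsub, hsize⟩ := exists_JJ_superset hab
        have hba : (0:ℝ) < b - a := by linarith
        have h6 : (ENNReal.ofReal (b-a))⁻¹ * ENNReal.ofReal ((2:ℝ)^m) ≤ 6 := by
          calc (ENNReal.ofReal (b-a))⁻¹ * ENNReal.ofReal ((2:ℝ)^m)
              ≤ (ENNReal.ofReal (b-a))⁻¹ * (ENNReal.ofReal (b-a) * 6) := by
                apply mul_le_mul_right
                rw [show ENNReal.ofReal (b-a) * 6 = ENNReal.ofReal (6*(b-a)) from by
                  rw [ENNReal.ofReal_mul (by norm_num : (0:ℝ) ≤ 6)]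
                  rw [show ENNReal.ofReal 6 * ENNReal.ofReal (b-a)
                    = ENNReal.ofReal (b-a) * ENNReal.ofReal 6 from mul_comm _ _]
                  congr 1
                  simp [ENNReal.ofReal_ofNat]]
                exact ENNReal.ofReal_le_ofReal hsize
            _ = ((ENNReal.ofReal (b-a))⁻¹ * ENNReal.ofReal (b-a)) * 6 := by ring
            _ = 6 := by
                rw [ENNReal.inv_mul_cancel (ENNReal.ofReal_pos.mpr hba).ne'
                  ENNReal.ofReal_ne_top, one_mul]
        calc (ENNReal.ofReal (b-a))⁻¹ * ∫⁻ y in Icc a b, wn y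
            ≤ (ENNReal.ofReal (b-a))⁻¹ * ∫⁻ y in JJ γ m k, wn y :=
              mul_le_mul_right (lintegral_mono_set hsub) _
          _ = ((ENNReal.ofReal (b-a))⁻¹ * ENNReal.ofReal ((2:ℝ)^m)) * av γ m k wn := by
              have hJint : ∫⁻ y in JJ γ m k, wn y
                  = ENNReal.ofReal ((2:ℝ)^m) * av γ m k wn := by
                rw [av_eq, ← mul_assoc,
                  ENNReal.mul_inv_cancel (ENNReal.ofReal_pos.mpr (zpow_pos two_pos m)).ne'
                    ENNReal.ofReal_ne_top, one_mul]
              rw [hJint, ← mul_assoc]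
          _ ≤ 6 * av γ m k wn := mul_le_mul_left h6 _
          _ ≤ 6 * ((2*K) * wn x) := by
              apply mul_le_mul_right
              calc av γ m k wn ≤ mg γ wn x := av_le_mg (hsub hx) wn
                _ ≤ AA wn x := mg_le_AA γ wn x
                _ ≤ (2*K) * wn x := hAwn x
          _ = ΛE * wn x := by rw [hΛE]; ring
      have hmuck : muckenhouptConst (s/2) (fun x => (wn x).toReal) ≤ ΛE :=
        muck_le hwnm hwnpos hwnt hΛE0 hΛEt hs hA1
      have hup' := hup (fun x => (wn x).toReal)
        (fun x => ENNReal.toReal_pos (hwnpos x).ne' (hwnt x))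
        hwnm.ennreal_toReal
        (ne_top_of_le_ne_top hΛEt hmuck) f
      -- rewrite weighted norms
      have hWnorm : ∀ gg : ℝ → ℂ, weightedNorm s (fun x => (wn x).toReal) gg
          = (∫⁻ x, (‖gg x‖₊ : ℝ≥0∞)^s * wn x)^(1/s) := by
        intro gg
        rw [weightedNorm]
        congr 1
        apply lintegral_congr
        intro x
        rw [ENNReal.ofReal_toReal (hwnt x)]
      set WT := ∫⁻ x, (‖T f x‖₊ : ℝ≥0∞)^s * wn x with hWT
      set WF := ∫⁻ x, (‖f x‖₊ : ℝ≥0∞)^s * wn x with hWF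
      rw [hWnorm (T f), hWnorm f] at hup'
      have hs0 : (0:ℝ) < s := by linarith
      have hup2 : WT^(1/s) ≤ ENNReal.ofReal C * ΛE^β * WF^(1/s) := by
        refine le_trans hup' ?_
        apply mul_le_mul_left
        exact mul_le_mul_right (ENNReal.rpow_le_rpow hmuck hβ) _
      have hWTle : WT ≤ (ENNReal.ofReal C * ΛE^β)^s * WF := by
        have e1 : (WT^(1/s))^s = WT := by
          rw [← ENNReal.rpow_mul, one_div, inv_mul_cancel₀ hs0.ne', ENNReal.rpow_one]
        have e2 : (ENNReal.ofReal C * ΛE^β * WF^(1/s))^s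
            = (ENNReal.ofReal C * ΛE^β)^s * WF := by
          rw [ENNReal.mul_rpow_of_nonneg _ _ hs0.le, ← ENNReal.rpow_mul, one_div,
            inv_mul_cancel₀ hs0.ne', ENNReal.rpow_one]
        calc WT = (WT^(1/s))^s := e1.symm
          _ ≤ (ENNReal.ofReal C * ΛE^β * WF^(1/s))^s := ENNReal.rpow_le_rpow hup2 hs0.le
          _ = (ENNReal.ofReal C * ΛE^β)^s * WF := e2
      -- lower bound for WT
      have hWTlow : ∫⁻ x, (φ x)^(s/p) * min (g x) (ENNReal.ofReal (n+1)) ≤ WT := by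
        apply lintegral_mono
        intro x
        apply mul_le_mul'
        · calc (φ x)^(s/p) ≤ ((‖T f x‖₊:ℝ≥0∞)^p)^(s/p) :=
              ENNReal.rpow_le_rpow (hφle x) (by positivity)
            _ = (‖T f x‖₊:ℝ≥0∞)^s := by
              rw [← ENNReal.rpow_mul]
              congr 1
              field_simp
        · exact min_le_min (hwge x) le_rfl
      -- Hoelder for WF
      obtain ⟨ρ, hρm, hρle, hρeq⟩ := exists_measurable_le_lintegral_eq volume
        (fun x => (‖f x‖₊:ℝ≥0∞)^s * wn x)
      set u : ℝ → ℝ≥0∞ := fun x => ρ x / wn x with hu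
      have hum : Measurable u := hρm.div hwnm
      have huw : ∀ x, u x * wn x = ρ x := fun x =>
        ENNReal.div_mul_cancel (hwnpos x).ne' (hwnt x)
      have hule : ∀ x, u x ≤ (‖f x‖₊:ℝ≥0∞)^s := by
        intro x
        rw [hu]
        simp only
        rw [ENNReal.div_le_iff (hwnpos x).ne' (hwnt x)]
        exact hρle x
      have hWFle : WF ≤ Fp^(s/p) * (2 * Ip^(1/q)) := by
        have e0 : WF = ∫⁻ x, u x * wn x := by
          rw [hWF, hρeq]
          exact (lintegral_congr huw).symm
        have hhold : ∫⁻ x, u x * wn x ≤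
            (∫⁻ x, (u x)^(p/s))^(1/(p/s)) * (∫⁻ x, (wn x)^q)^(1/q) := by
          have := ENNReal.lintegral_mul_le_Lp_mul_Lq volume hconj
            hum.aemeasurable hwnm.aemeasurable
          simpa using this
        have h1 : (∫⁻ x, (u x)^(p/s)) ≤ Fp := by
          apply lintegral_mono
          intro x
          calc (u x)^(p/s) ≤ ((‖f x‖₊:ℝ≥0∞)^s)^(p/s) :=
              ENNReal.rpow_le_rpow (hule x) (by positivity)
            _ = (‖f x‖₊:ℝ≥0∞)^p := by
              rw [← ENNReal.rpow_mul]
              congr 1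
              field_simp
        have h2 : (∫⁻ x, (wn x)^q)^(1/q) ≤ 2 * Ip^(1/q) := by
          refine le_trans ?_ hwN
          apply ENNReal.rpow_le_rpow _ (by positivity)
          apply lintegral_mono
          intro x
          exact ENNReal.rpow_le_rpow (min_le_left _ _) hq0.le
        have h3 : (∫⁻ x, (u x)^(p/s))^(1/(p/s)) ≤ Fp^(s/p) := by
          rw [show (1:ℝ)/(p/s) = s/p from one_div_div p s]
          exact ENNReal.rpow_le_rpow h1 (by positivity)
        calc WF = ∫⁻ x, u x * wn x := e0
          _ ≤ _ := hhold
          _ ≤ Fp^(s/p) * (2 * Ip^(1/q)) := mul_le_mul' h3 h2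
      calc ∫⁻ x, (φ x)^(s/p) * min (g x) (ENNReal.ofReal (n+1)) ≤ WT := hWTlow
        _ ≤ (ENNReal.ofReal C * ΛE^β)^s * WF := hWTle
        _ ≤ (ENNReal.ofReal C * ΛE^β)^s * (Fp^(s/p) * (2 * Ip^(1/q))) :=
            mul_le_mul_right hWFle _
    -- exponent fact
    have hexp1 : s/p + 1/q = 1 := by
      rw [hqinv]
      field_simp
      ring
    -- monotone convergence to pass to the full weight
    have hsup : ∀ x:ℝ, (⨆ n:ℕ, min (g x) (ENNReal.ofReal ((n:ℝ)+1))) = g x := by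
      intro x
      apply le_antisymm (iSup_le fun n => min_le_left _ _)
      rcases eq_or_ne (g x) ⊤ with hgt | hgt
      · rw [hgt]
        have e : (⨆ n:ℕ, min (⊤:ℝ≥0∞) (ENNReal.ofReal ((n:ℝ)+1)))
            = ⨆ n:ℕ, ENNReal.ofReal ((n:ℝ)+1) := by
          apply iSup_congr
          intro n
          exact min_eq_right le_top
        rw [e]
        have hcast : ∀ m:ℕ, (m:ℝ≥0∞) ≤ ⨆ n:ℕ, ENNReal.ofReal ((n:ℝ)+1) := by
          intro m
          refine le_trans ?_ (le_iSup _ m)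
          rw [show ((m:ℝ≥0∞)) = ENNReal.ofReal (m:ℝ) from (ENNReal.ofReal_natCast m).symm]
          exact ENNReal.ofReal_le_ofReal (by linarith)
        calc (⊤:ℝ≥0∞) = ⨆ m:ℕ, (m:ℝ≥0∞) := ENNReal.iSup_natCast.symm
          _ ≤ _ := iSup_le hcast
      · obtain ⟨m, hm⟩ := exists_nat_gt (g x).toReal
        have h1 : g x ≤ min (g x) (ENNReal.ofReal ((m:ℝ)+1)) := by
          apply le_min le_rfl
          rw [← ENNReal.ofReal_toReal hgt]
          exact ENNReal.ofReal_le_ofReal (by linarith)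
        exact le_trans h1 (le_iSup (fun n:ℕ => min (g x) (ENNReal.ofReal ((n:ℝ)+1))) m)
    have hIple : Ip ≤ (ENNReal.ofReal C * ΛE^β)^s * (Fp^(s/p) * (2 * Ip^(1/q))) := by
      have hmeas : ∀ n:ℕ, Measurable
          (fun x => (φ x)^(s/p) * min (g x) (ENNReal.ofReal ((n:ℝ)+1))) :=
        fun n => (hφm.pow_const _).mul (hgm.min measurable_const)
      have hmono : Monotone
          (fun (n:ℕ) (x:ℝ) => (φ x)^(s/p) * min (g x) (ENNReal.ofReal ((n:ℝ)+1))) := by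
        intro a b hab
        intro x
        apply mul_le_mul_right
        apply min_le_min le_rfl
        apply ENNReal.ofReal_le_ofReal
        have : (a:ℝ) ≤ (b:ℝ) := Nat.cast_le.mpr hab
        linarith
      have hMCT := lintegral_iSup (μ := volume) hmeas hmono
      have hptsup : ∀ x, (⨆ n:ℕ, (φ x)^(s/p) * min (g x) (ENNReal.ofReal ((n:ℝ)+1)))
          = φ x := by
        intro x
        rw [← ENNReal.mul_iSup, hsup x]
        rw [hg]
        simp only
        rw [← ENNReal.rpow_add_of_nonneg _ _ (by positivity) (by positivity), hexp1,
          ENNReal.rpow_one]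
      have hlim : (⨆ n:ℕ, ∫⁻ x, (φ x)^(s/p) * min (g x) (ENNReal.ofReal ((n:ℝ)+1))) = Ip := by
        rw [← hMCT]
        rw [lintegral_congr hptsup, hφint]
      calc Ip = ⨆ n:ℕ, ∫⁻ x, (φ x)^(s/p) * min (g x) (ENNReal.ofReal ((n:ℝ)+1)) := hlim.symm
        _ ≤ _ := iSup_le fun n => hbound n
    -- cancellation
    have hIq0 : Ip^(1/q) ≠ 0 :=
      (ENNReal.rpow_pos (pos_iff_ne_zero.mpr hIp0) hIpt).ne'
    have hIqt : Ip^(1/q) ≠ ⊤ := ENNReal.rpow_ne_top_of_nonneg (by positivity) hIpt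
    have hsplit : Ip = Ip^(s/p) * Ip^(1/q) := by
      rw [← ENNReal.rpow_add _ _ hIp0 hIpt, hexp1, ENNReal.rpow_one]
    have hcancel : Ip^(s/p) ≤ ((ENNReal.ofReal C * ΛE^β)^s * (2 * Fp^(s/p))) := by
      have h1 : Ip^(s/p) * Ip^(1/q)
          ≤ ((ENNReal.ofReal C * ΛE^β)^s * (2 * Fp^(s/p))) * Ip^(1/q) := by
        calc Ip^(s/p) * Ip^(1/q) = Ip := hsplit.symm
          _ ≤ (ENNReal.ofReal C * ΛE^β)^s * (Fp^(s/p) * (2 * Ip^(1/q))) := hIple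
          _ = ((ENNReal.ofReal C * ΛE^β)^s * (2 * Fp^(s/p))) * Ip^(1/q) := by ring
      exact (ENNReal.mul_le_mul_iff_left hIq0 hIqt).mp h1
    -- conclude
    have hs0 : (0:ℝ) < s := by linarith
    have hB1 : B = (Ip^(s/p))^(1/s) := by
      rw [hBIp, ← ENNReal.rpow_mul]
      congr 1
      field_simp
    have hΛEval : ΛE = ENNReal.ofReal (3072*p) := by
      rw [hΛE, hK]
      rw [show ((12:ℝ≥0∞)) = ENNReal.ofReal 12 from by
        rw [ENNReal.ofReal_ofNat]]
      rw [← ENNReal.ofReal_mul (by norm_num)]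
      congr 1
      ring
    calc B = (Ip^(s/p))^(1/s) := hB1
      _ ≤ ((ENNReal.ofReal C * ΛE^β)^s * (2 * Fp^(s/p)))^(1/s) :=
          ENNReal.rpow_le_rpow hcancel (by positivity)
      _ = (ENNReal.ofReal C * ΛE^β) * ((2:ℝ≥0∞)^(1/s) * Fp^(1/p)) := by
          rw [ENNReal.mul_rpow_of_nonneg ((ENNReal.ofReal C * ΛE^β)^s) (2 * Fp^(s/p))
            (by positivity : (0:ℝ) ≤ 1/s)]
          rw [ENNReal.mul_rpow_of_nonneg 2 (Fp^(s/p)) (by positivity : (0:ℝ) ≤ 1/s)]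
          rw [← ENNReal.rpow_mul (ENNReal.ofReal C * ΛE^β) s (1/s),
            mul_one_div_cancel hs0.ne', ENNReal.rpow_one, ← ENNReal.rpow_mul Fp]
          have he : s/p * (1/s) = 1/p := by
            field_simp
          rw [he]
      _ ≤ (ENNReal.ofReal C * ΛE^β) * ((2:ℝ≥0∞) * Fp^(1/p)) := by
          apply mul_le_mul_right
          apply mul_le_mul_left
          calc (2:ℝ≥0∞)^(1/s) ≤ (2:ℝ≥0∞)^(1:ℝ) := by
                apply ENNReal.rpow_le_rpow_of_exponent_le (by norm_num)
                rw [div_le_one hs0]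
                linarith
            _ = 2 := ENNReal.rpow_one 2
      _ = ENNReal.ofReal C' * F := by
          rw [hFFp, hΛEval, hC']
          rw [ENNReal.ofReal_rpow_of_pos (by positivity)]
          rw [show ENNReal.ofReal (2*C*(3072*p)^β)
            = ENNReal.ofReal C * ENNReal.ofReal ((3072*p)^β) * 2 from by
              rw [← ENNReal.ofReal_mul hC.le]
              rw [show ((2:ℝ≥0∞)) = ENNReal.ofReal 2 from by rw [ENNReal.ofReal_ofNat]]
              rw [← ENNReal.ofReal_mul (by positivity)]
              congr 1
              ring]
          ring
  have hcp := hlow p hpP0 C' key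
  -- final arithmetic contradiction
  have hCp' : C' ≤ 6144*C*p^β := by
    rw [hC']
    have h1 : (3072*p)^β = 3072^β * p^β :=
      Real.mul_rpow (by norm_num) hp0.le
    rw [h1]
    have h2 : (3072:ℝ)^β ≤ 3072 := by
      calc (3072:ℝ)^β ≤ 3072^(1:ℝ) :=
        Real.rpow_le_rpow_of_exponent_le (by norm_num) (by linarith)
        _ = 3072 := Real.rpow_one _
    have h3 : (0:ℝ) ≤ p^β := Real.rpow_nonneg hp0.le β
    have h4 : 3072^β * p^β ≤ 3072 * p^β := mul_le_mul_of_nonneg_right h2 h3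
    have h5 : 2*C*(3072^β * p^β) ≤ 2*C*(3072*p^β) :=
      mul_le_mul_of_nonneg_left h4 (by positivity)
    have h6 : 2*C*(3072*p^β) = 6144*C*p^β := by ring
    linarith [h5, h6]
  have hp1β : 6144*C < c * p^(1-β) := by
    have h1 : Y^(1-β) = 6144*C/c + 1 := by
      rw [hY, ← Real.rpow_mul (by positivity), one_div,
        inv_mul_cancel₀ h1β.ne', Real.rpow_one]
    have h2 : Y^(1-β) ≤ p^(1-β) :=
      Real.rpow_le_rpow hY0.le hpY h1β.le
    rw [h1] at h2
    have h3 : 6144*C/c < p^(1-β) := by linarith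
    rw [div_lt_iff₀ hc] at h3
    linarith [mul_comm c (p^(1-β))]
  have hpsplit : p = p^(1-β) * p^β := by
    rw [← Real.rpow_add hp0]
    norm_num
  have hpβ0 : (0:ℝ) < p^β := Real.rpow_pos_of_pos hp0 β
  nlinarith [hcp, hCp', hp1β, hpsplit, hpβ0]
end

section
/- Let $T$ be the square function associated with the family of unit intervals $\omega_k = [k, k+1]$, $k\in\mathbb{Z}$: $Tf = (\sum_k |f*\check{\mathbf{1}}_{[k,k+1]}|^2)^{1/2}$. Then $T$ is not bounded on $L^p(\mathbb{R})$ for any $1 < p < 2$; i.e., there is no constant $C$ with $\|Tf\|_p \le C\|f\|_p$ for all Schwartz $f$. -/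
open MeasureTheory Real Set FourierTransform Filter
open scoped ContDiff

noncomputable section

namespace RdFCE

/-- A smooth compactly supported function as a Schwartz map. -/
def ofCompactSupport (f : ℝ → ℂ) (h1 : ContDiff ℝ ∞ f) (h2 : HasCompactSupport f) :
    SchwartzMap ℝ ℂ where
  toFun := f
  smooth' := h1
  decay' := by
    intro k n
    have hsupp : HasCompactSupport fun x : ℝ => ‖x‖ ^ k * ‖iteratedFDeriv ℝ n f x‖ := by
      apply HasCompactSupport.mul_left
      exact (h2.iteratedFDeriv n).norm
    have hcont : Continuous fun x : ℝ => ‖x‖ ^ k * ‖iteratedFDeriv ℝ n f x‖ :=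
      ((continuous_norm.pow k)).mul (h1.continuous_iteratedFDeriv (by exact_mod_cast le_top)).norm
    obtain ⟨C, hC⟩ := hcont.bounded_above_of_compact_support hsupp
    exact ⟨C, fun x => (Real.le_norm_self _).trans (hC x)⟩

@[simp] lemma ofCompactSupport_apply (f : ℝ → ℂ) (h1 h2) (x : ℝ) :
    ofCompactSupport f h1 h2 x = f x := rfl

/-- The bump function: `1` on `[1/4,3/4]`, supported in `(0,1)`. -/
def bump : ContDiffBump (1/2 : ℝ) := ⟨1/4, 1/2, by norm_num, by norm_num⟩

lemma bumpN_contDiff (N : ℕ) : ContDiff ℝ ∞ (fun ξ : ℝ => (bump (ξ / N) : ℂ)) :=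
  Complex.ofRealCLM.contDiff.comp (bump.contDiff.comp (contDiff_id.div_const _))

lemma bumpN_compactSupport (N : ℕ) (hN : 1 ≤ N) :
    HasCompactSupport (fun ξ : ℝ => (bump (ξ / N) : ℂ)) := by
  have h0 : (N : ℝ) ≠ 0 := by positivity
  have : HasCompactSupport (fun ξ : ℝ => bump (ξ / N)) := by
    have h := (bump.hasCompactSupport (E := ℝ)).comp_homeomorph
      (Homeomorph.mulRight₀ ((N : ℝ)⁻¹) (by positivity))
    exact h.mono (by intro x hx; simpa [div_eq_mul_inv] using hx)
  exact this.comp_left (g := fun r : ℝ => (r : ℂ)) (by simp)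

end RdFCE
namespace RdFCE

def ΨN (N : ℕ) (hN : 1 ≤ N) : SchwartzMap ℝ ℂ :=
  ofCompactSupport _ (bumpN_contDiff N) (bumpN_compactSupport N hN)

def fN (N : ℕ) (hN : 1 ≤ N) : SchwartzMap ℝ ℂ :=
  (FourierTransform.fourierCLE ℂ (SchwartzMap ℝ ℂ)).symm (ΨN N hN)

lemma fourier_fN (N : ℕ) (hN : 1 ≤ N) :
    𝓕 ⇑(fN N hN) = fun ξ : ℝ => (bump (ξ / N) : ℂ) := by
  have h : (FourierTransform.fourierCLE ℂ (SchwartzMap ℝ ℂ)) (fN N hN) = ΨN N hN :=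
    (FourierTransform.fourierCLE ℂ (SchwartzMap ℝ ℂ)).apply_symm_apply _
  have := congrArg (fun f : SchwartzMap ℝ ℂ => ⇑f) h
  exact (by simpa [FourierTransform.fourierCLE_apply, SchwartzMap.fourier_coe] using this :
    𝓕 ⇑(fN N hN) = ⇑(ΨN N hN))

lemma fN_coe (N : ℕ) (hN : 1 ≤ N) :
    ⇑(fN N hN) = 𝓕⁻ (fun ξ : ℝ => (bump (ξ / N) : ℂ)) := by
  rw [fN, FourierTransform.fourierCLE_symm_apply, SchwartzMap.fourierInv_coe]; rfl

lemma fN_scale (N : ℕ) (hN : 1 ≤ N) (x : ℝ) :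
    fN N hN x = ((N : ℝ) : ℂ) * fN 1 le_rfl ((N : ℝ) * x) := by
  have hN0 : (N : ℝ) ≠ 0 := by positivity
  have h1 : ⇑(fN N hN) = 𝓕⁻ (fun ξ : ℝ => (bump (ξ / N) : ℂ)) := fN_coe N hN
  have h2 : ⇑(fN 1 le_rfl) = 𝓕⁻ (fun ξ : ℝ => (bump (ξ / (1:ℕ)) : ℂ)) := fN_coe 1 le_rfl
  rw [h1, h2, Real.fourierInv_eq', Real.fourierInv_eq']
  have key : (∫ v : ℝ, Complex.exp ((2 * π * inner ℝ v x : ℝ) * Complex.I) • (bump (v / N) : ℂ))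
      = ∫ v : ℝ, (fun u : ℝ =>
          Complex.exp ((2 * π * inner ℝ u ((N:ℝ) * x) : ℝ) * Complex.I) • (bump (u / (1:ℕ)) : ℂ))
          (v / N) := by
    congr 1 with v
    have hvx : (N : ℝ) * x * (v / N) = x * v := by field_simp
    simp only [RCLike.inner_apply, conj_trivial, hvx, Nat.cast_one, div_one]
  have key2 := MeasureTheory.Measure.integral_comp_div
    (fun u : ℝ => Complex.exp ((2 * π * inner ℝ u ((N:ℝ) * x) : ℝ) * Complex.I)
      • (bump (u / (1:ℕ)) : ℂ)) (N : ℝ)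
  rw [key, key2, abs_of_nonneg (by positivity : (0:ℝ) ≤ (N:ℝ))]
  simp [Complex.real_smul]

lemma eLpNorm_fN (p : ℝ) (hp : 1 < p) (N : ℕ) (hN : 1 ≤ N) :
    eLpNorm ⇑(fN N hN) (ENNReal.ofReal p) volume
      = ENNReal.ofReal ((N : ℝ) ^ (1 - 1/p)) *
        eLpNorm ⇑(fN 1 le_rfl) (ENNReal.ofReal p) volume := by
  have hp0 : (0:ℝ) < p := by linarith
  have hq0 : ENNReal.ofReal p ≠ 0 := by simp [ENNReal.ofReal_eq_zero]; linarith
  have hqt : ENNReal.ofReal p ≠ ⊤ := ENNReal.ofReal_ne_top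
  have hN0 : (0:ℝ) < (N:ℝ) := by positivity
  have hfun : ⇑(fN N hN)
      = ((N:ℝ):ℂ) • (⇑(fN 1 le_rfl) ∘ fun x : ℝ => (N:ℝ) * x) := by
    funext x
    simpa [Pi.smul_apply, smul_eq_mul] using fN_scale N hN x
  rw [hfun, eLpNorm_const_smul]
  have hmap : Measure.map (fun x : ℝ => (N:ℝ) * x) volume
      = ENNReal.ofReal |((N:ℝ))⁻¹| • volume := Real.map_volume_mul_left (ne_of_gt hN0)
  have hcomp : eLpNorm (⇑(fN 1 le_rfl) ∘ fun x : ℝ => (N:ℝ) * x) (ENNReal.ofReal p) volume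
      = eLpNorm ⇑(fN 1 le_rfl) (ENNReal.ofReal p)
          (Measure.map (fun x : ℝ => (N:ℝ) * x) volume) := by
    rw [eLpNorm_map_measure ((fN 1 le_rfl).continuous.stronglyMeasurable.aestronglyMeasurable)
      (measurable_const_mul _).aemeasurable]
  rw [hcomp, hmap, eLpNorm_smul_measure_of_ne_top hqt]
  have htr : (1 / ENNReal.ofReal p).toReal = 1 / p := by
    rw [one_div, ENNReal.toReal_inv, ENNReal.toReal_ofReal hp0.le, one_div]
  rw [htr]
  have habs : |((N:ℝ))⁻¹| = (N:ℝ)⁻¹ := abs_of_pos (by positivity)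
  rw [habs, ENNReal.ofReal_rpow_of_pos (by positivity)]
  have hnorm : ‖((N:ℝ):ℂ)‖ₑ = ENNReal.ofReal (N:ℝ) := by
    simp [← ofReal_norm]
  rw [hnorm, smul_eq_mul, ← mul_assoc, ← ENNReal.ofReal_mul hN0.le]
  congr 2
  rw [Real.inv_rpow hN0.le, Real.rpow_sub hN0, Real.rpow_one]
  field_simp

lemma eLpNorm_schwartz_lt_top (p : ℝ) (hp : 1 < p) (f : SchwartzMap ℝ ℂ) :
    eLpNorm ⇑f (ENNReal.ofReal p) volume < ⊤ := by
  have hp0 : (0:ℝ) < p := by linarith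
  have hq0 : ENNReal.ofReal p ≠ 0 := by simp [ENNReal.ofReal_eq_zero]; linarith
  have hqt : ENNReal.ofReal p ≠ ⊤ := ENNReal.ofReal_ne_top
  set M : ℝ := SchwartzMap.seminorm ℝ 0 0 f with hM
  have hMnn : 0 ≤ M := apply_nonneg _ _
  have hbound : ∀ x : ℝ, ‖f x‖ ≤ M := fun x => SchwartzMap.norm_le_seminorm ℝ f x
  rw [eLpNorm_eq_lintegral_rpow_enorm_toReal hq0 hqt, ENNReal.toReal_ofReal hp0.le]
  refine ENNReal.rpow_lt_top_of_nonneg (by positivity) (ne_of_lt ?_)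
  have key : ∀ x : ℝ, ‖f x‖ₑ ^ p ≤ ENNReal.ofReal ((M+1) ^ (p-1)) * ‖f x‖ₑ := by
    intro x
    have h1 : ‖f x‖ₑ ^ p = ‖f x‖ₑ ^ (p-1) * ‖f x‖ₑ := by
      rcases eq_or_ne ‖f x‖ₑ 0 with h | h
      · rw [h]; rw [ENNReal.zero_rpow_of_pos hp0, ENNReal.zero_rpow_of_pos (by linarith), mul_zero]
      · have e1 : p = (p-1) + 1 := by ring
        conv_lhs => rw [e1]
        rw [ENNReal.rpow_add _ _ h enorm_ne_top, ENNReal.rpow_one]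
    rw [h1]
    have hfx : ‖f x‖ₑ ≤ ENNReal.ofReal (M+1) := by
      rw [← ofReal_norm]
      exact ENNReal.ofReal_le_ofReal (by linarith [hbound x])
    gcongr
    calc ‖f x‖ₑ ^ (p-1) ≤ (ENNReal.ofReal (M+1)) ^ (p-1) :=
          ENNReal.rpow_le_rpow hfx (by linarith)
      _ = ENNReal.ofReal ((M+1) ^ (p-1)) := ENNReal.ofReal_rpow_of_pos (by linarith)
  calc ∫⁻ x, ‖f x‖ₑ ^ p ∂volume
      ≤ ∫⁻ x, ENNReal.ofReal ((M+1) ^ (p-1)) * ‖f x‖ₑ ∂volume := lintegral_mono key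
    _ = ENNReal.ofReal ((M+1) ^ (p-1)) * ∫⁻ x, ‖f x‖ₑ ∂volume :=
        lintegral_const_mul' _ _ ENNReal.ofReal_ne_top
    _ < ⊤ := ENNReal.mul_lt_top ENNReal.ofReal_lt_top f.integrable.2

/-- The profile function. -/
def prof (x : ℝ) : ℝ := ‖Complex.exp (2 * (π:ℂ) * Complex.I * x) - 1‖ / (2 * π * |x|)

lemma prof_nonneg (x : ℝ) : 0 ≤ prof x := by
  unfold prof; positivity

lemma prof_zero : prof 0 = 0 := by simp [prof]

lemma integral_good (N : ℕ) (hN : 1 ≤ N) (k : ℤ) (x : ℝ)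
    (hk1 : (N:ℝ)/4 ≤ (k:ℝ)) (hk2 : (k:ℝ) + 1 ≤ 3*(N:ℝ)/4) :
    (prof x)^2 ≤ ‖∫ ξ in Icc (k:ℝ) ((k:ℝ)+1), (bump (ξ/N) : ℂ) *
      Complex.exp (2 * (π:ℂ) * Complex.I * (ξ:ℂ) * (x:ℂ))‖^2 := by
  have hN0 : (0:ℝ) < (N:ℝ) := by positivity
  have hcongr : ∫ ξ in Icc (k:ℝ) ((k:ℝ)+1), (bump (ξ/N) : ℂ) *
        Complex.exp (2 * (π:ℂ) * Complex.I * (ξ:ℂ) * (x:ℂ))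
      = ∫ ξ in Icc (k:ℝ) ((k:ℝ)+1),
        Complex.exp (2 * (π:ℂ) * Complex.I * (ξ:ℂ) * (x:ℂ)) := by
    apply setIntegral_congr_fun measurableSet_Icc
    intro ξ hξ
    rcases hξ with ⟨h1, h2⟩
    have hb : bump (ξ/N) = 1 := by
      apply bump.one_of_mem_closedBall
      have hrIn : bump.rIn = 1/4 := rfl
      rw [Real.closedBall_eq_Icc, hrIn]
      constructor
      · rw [le_div_iff₀ hN0]; nlinarith
      · rw [div_le_iff₀ hN0]; nlinarith
    simp [hb]
  rw [hcongr]
  rcases eq_or_ne x 0 with hx | hx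
  · subst hx
    rw [prof_zero]
    simp
  · -- x ≠ 0
    have hc : (2 * (π:ℂ) * Complex.I * (x:ℂ)) ≠ 0 := by
      simp [Complex.ext_iff, Real.pi_ne_zero, hx, Complex.I_ne_zero]
    have hre : ∫ ξ in Icc (k:ℝ) ((k:ℝ)+1),
          Complex.exp (2 * (π:ℂ) * Complex.I * (ξ:ℂ) * (x:ℂ))
        = ∫ ξ in (k:ℝ)..((k:ℝ)+1), Complex.exp ((2 * (π:ℂ) * Complex.I * (x:ℂ)) * (ξ:ℂ)) := by
      rw [MeasureTheory.integral_Icc_eq_integral_Ioc,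
        ← intervalIntegral.integral_of_le (by linarith : (k:ℝ) ≤ (k:ℝ)+1)]
      apply intervalIntegral.integral_congr
      intro ξ _; ring_nf
    rw [hre, integral_exp_mul_complex hc]
    push_cast
    have hfact : Complex.exp (2 * (π:ℂ) * Complex.I * (x:ℂ) * (((k:ℂ))+1))
          - Complex.exp (2 * (π:ℂ) * Complex.I * (x:ℂ) * ((k:ℂ)))
        = Complex.exp (2 * (π:ℂ) * Complex.I * (x:ℂ) * ((k:ℂ))) *
          (Complex.exp (2 * (π:ℂ) * Complex.I * (x:ℂ)) - 1) := by
      rw [mul_sub, ← Complex.exp_add, mul_one]; ring_nf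
    rw [norm_div, hfact, norm_mul]
    have h1 : ‖Complex.exp (2 * (π:ℂ) * Complex.I * (x:ℂ) * ((k:ℂ)))‖ = 1 := by
      have : (2 * (π:ℂ) * Complex.I * (x:ℂ) * ((k:ℂ)))
          = ((2 * π * x * (k:ℝ) : ℝ) : ℂ) * Complex.I := by push_cast; ring
      rw [this, Complex.norm_exp_ofReal_mul_I]
    have h2 : ‖(2 * (π:ℂ) * Complex.I * (x:ℂ))‖ = 2 * π * |x| := by
      have : (2 * (π:ℂ) * Complex.I * (x:ℂ)) = ((2 * π * x : ℝ) : ℂ) * Complex.I := by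
        push_cast; ring
      rw [this, norm_mul, Complex.norm_real, Complex.norm_I, mul_one,
        Real.norm_eq_abs, abs_mul, abs_mul]
      simp [abs_of_pos Real.pi_pos]
    rw [h1, h2, one_mul]
    have : prof x = ‖Complex.exp (2 * (π:ℂ) * Complex.I * (x:ℂ)) - 1‖ / (2 * π * |x|) := by
      rw [prof]
    rw [this]

lemma integral_bad (N : ℕ) (hN : 1 ≤ N) (k : ℤ) (x : ℝ)
    (hk : (k:ℝ) + 1 ≤ 0 ∨ (N:ℝ) ≤ (k:ℝ)) :
    (∫ ξ in Icc (k:ℝ) ((k:ℝ)+1), (bump (ξ/N) : ℂ) *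
      Complex.exp (2 * (π:ℂ) * Complex.I * (ξ:ℂ) * (x:ℂ))) = 0 := by
  have hN0 : (0:ℝ) < (N:ℝ) := by positivity
  have : ∀ ξ ∈ Icc (k:ℝ) ((k:ℝ)+1), (bump (ξ/N) : ℂ) *
      Complex.exp (2 * (π:ℂ) * Complex.I * (ξ:ℂ) * (x:ℂ)) = 0 := by
    intro ξ hξ
    rcases hξ with ⟨h1, h2⟩
    have hb : bump (ξ/N) = 0 := by
      apply bump.zero_of_le_dist
      rw [Real.dist_eq]
      have hrOut : bump.rOut = 1/2 := rfl
      rcases hk with hk | hk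
      · have hxi : ξ / N ≤ 0 := div_nonpos_of_nonpos_of_nonneg (by linarith) hN0.le
        have habs : |ξ/N - 1/2| = 1/2 - ξ/N := by rw [abs_of_nonpos (by linarith)]; ring
        rw [habs, hrOut]; linarith
      · have hxi : (1:ℝ) ≤ ξ / N := by rw [le_div_iff₀ hN0]; linarith
        have habs : |ξ/N - 1/2| = ξ/N - 1/2 := abs_of_nonneg (by linarith)
        rw [habs, hrOut]; linarith
    simp [hb]
  rw [setIntegral_congr_fun measurableSet_Icc this]
  simp

lemma pointwise_lb (m : ℕ) (hm : 1 ≤ m) (x : ℝ) :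
    Real.sqrt m * prof x ≤ Real.sqrt (∑' k : ℤ,
      ‖∫ ξ in Icc (k:ℝ) ((k:ℝ)+1), (bump (ξ/((4*m : ℕ) : ℝ)) : ℂ) *
        Complex.exp (2 * (π:ℂ) * Complex.I * (ξ:ℂ) * (x:ℂ))‖^2) := by
  have hN : 1 ≤ 4*m := by omega
  set F : ℤ → ℝ := fun k =>
    ‖∫ ξ in Icc (k:ℝ) ((k:ℝ)+1), (bump (ξ/((4*m : ℕ) : ℝ)) : ℂ) *
        Complex.exp (2 * (π:ℂ) * Complex.I * (ξ:ℂ) * (x:ℂ))‖^2 with hF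
  have hFnn : ∀ k, 0 ≤ F k := fun k => sq_nonneg _
  have hsum : Summable F := by
    apply summable_of_ne_finset_zero (s := Finset.Icc (-1 : ℤ) (4*m))
    intro k hk
    rw [Finset.mem_Icc, not_and_or, not_le, not_le] at hk
    have hbad : ((k:ℝ)) + 1 ≤ 0 ∨ ((4*m : ℕ) : ℝ) ≤ (k:ℝ) := by
      rcases hk with hk | hk
      · left
        have : k ≤ -2 := by omega
        have : (k:ℝ) ≤ -2 := by exact_mod_cast this
        linarith
      · right
        have : (4*m : ℤ) ≤ k := by omega
        exact_mod_cast this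
    rw [hF]
    simp only
    rw [integral_bad (4*m) hN k x hbad]
    simp
  have hgood : ∀ k ∈ Finset.Icc (m : ℤ) (2*m-1), prof x ^ 2 ≤ F k := by
    intro k hk
    rw [Finset.mem_Icc] at hk
    apply integral_good (4*m) hN k x
    · have : (m : ℤ) ≤ k := hk.1
      have : (m:ℝ) ≤ (k:ℝ) := by exact_mod_cast this
      push_cast
      linarith
    · have : k ≤ 2*m - 1 := hk.2
      have : (k:ℝ) ≤ 2*(m:ℝ) - 1 := by exact_mod_cast this
      push_cast
      have hm' : (1:ℝ) ≤ (m:ℝ) := by exact_mod_cast hm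
      linarith
  have hcard : (Finset.Icc (m : ℤ) (2*m-1)).card = m := by
    rw [Int.card_Icc]
    omega
  have hsumlb : (m : ℝ) * prof x ^ 2 ≤ ∑' k, F k := by
    calc (m : ℝ) * prof x ^ 2
        = ∑ _k ∈ Finset.Icc (m : ℤ) (2*m-1), prof x ^ 2 := by
          rw [Finset.sum_const, hcard, nsmul_eq_mul]
      _ ≤ ∑ k ∈ Finset.Icc (m : ℤ) (2*m-1), F k := Finset.sum_le_sum hgood
      _ ≤ ∑' k, F k := Summable.sum_le_tsum _ (fun k _ => hFnn k) hsum
  calc Real.sqrt m * prof x = Real.sqrt ((m:ℝ) * prof x ^ 2) := by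
        rw [Real.sqrt_mul (by positivity), Real.sqrt_sq (prof_nonneg x)]
    _ ≤ _ := Real.sqrt_le_sqrt hsumlb

lemma prof_eLpNorm_ne_zero (p : ℝ) (hp : 1 < p) :
    eLpNorm prof (ENNReal.ofReal p) volume ≠ 0 := by
  have hq0 : ENNReal.ofReal p ≠ 0 := by simp [ENNReal.ofReal_eq_zero]; linarith
  have hmeas : AEStronglyMeasurable prof (volume : Measure ℝ) := by
    apply Measurable.aestronglyMeasurable
    apply Measurable.div
    · exact (Continuous.norm (by continuity)).measurable
    · exact ((continuous_const.mul continuous_abs)).measurable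
  rw [Ne, eLpNorm_eq_zero_iff hmeas hq0]
  intro hae
  have hnull : volume {x : ℝ | prof x ≠ 0} = 0 := by
    have := hae
    rw [Filter.EventuallyEq] at this
    exact ae_iff.1 this
  have hsub : Ioo (0:ℝ) (1/2) ⊆ {x : ℝ | prof x ≠ 0} := by
    intro x hx
    rcases hx with ⟨hx0, hxhalf⟩
    have hne : Complex.exp (2 * (π:ℂ) * Complex.I * x) ≠ 1 := by
      intro heq
      rw [Complex.exp_eq_one_iff] at heq
      obtain ⟨n, hn⟩ := heq
      have h2pi : (2 * (π:ℂ) * Complex.I) ≠ 0 := by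
        simp [Complex.ext_iff, Real.pi_ne_zero, Complex.I_ne_zero]
      have hx_eq : (x:ℂ) = (n:ℂ) := by
        have : 2 * (π:ℂ) * Complex.I * x = 2 * (π:ℂ) * Complex.I * (n:ℂ) := by
          rw [hn]; ring
        exact mul_left_cancel₀ h2pi this
      have : x = (n:ℝ) := by exact_mod_cast hx_eq
      subst this
      rcases lt_or_ge n 1 with h | h
      · have : n ≤ 0 := by omega
        have : (n:ℝ) ≤ 0 := by exact_mod_cast this
        linarith
      · have : (1:ℝ) ≤ (n:ℝ) := by exact_mod_cast h
        linarith
    have : 0 < prof x := by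
      apply div_pos
      · rw [norm_pos_iff]
        exact sub_ne_zero_of_ne hne
      · have : 0 < |x| := abs_pos.mpr (ne_of_gt hx0)
        positivity
    exact ne_of_gt this
  have : volume (Ioo (0:ℝ) (1/2)) = 0 := measure_mono_null hsub hnull
  rw [Real.volume_Ioo] at this
  simp at this

end RdFCE

end

/-- The square function associated with the unit intervals `ωₖ = [k, k+1]`, `k ∈ ℤ`,
is unbounded on `L^p(ℝ)` for every `1 < p < 2`: there is no constant `C` with
`‖Tf‖_p ≤ C ‖f‖_p` for all Schwartz `f`. Here `f ∗ 1̌_{[k,k+1]}` is realized as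
`x ↦ ∫_{[k,k+1]} 𝓕f(ξ) e^{2πixξ} dξ`. -/
theorem unit_interval_square_function_unbounded_below_two
    (p : ℝ) (hp1 : 1 < p) (hp2 : p < 2) :
    ¬ ∃ C : ℝ, ∀ f : SchwartzMap ℝ ℂ,
      eLpNorm (fun x : ℝ => Real.sqrt (∑' k : ℤ,
          ‖∫ ξ in Set.Icc (k : ℝ) ((k : ℝ) + 1),
            FourierTransform.fourier (⇑f : ℝ → ℂ) ξ *
              Complex.exp (2 * (Real.pi : ℂ) * Complex.I * (ξ : ℂ) * (x : ℂ))‖ ^ 2))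
          (ENNReal.ofReal p) volume
        ≤ ENNReal.ofReal C * eLpNorm (⇑f) (ENNReal.ofReal p) volume := by
  rintro ⟨C, hC⟩
  have hp0 : (0:ℝ) < p := by linarith
  set q := ENNReal.ofReal p with hq
  have hG : eLpNorm ⇑(RdFCE.fN 1 le_rfl) q volume < ⊤ :=
    RdFCE.eLpNorm_schwartz_lt_top p hp1 _
  set G := eLpNorm ⇑(RdFCE.fN 1 le_rfl) q volume with hGdef
  have hE0 : eLpNorm RdFCE.prof q volume ≠ 0 := RdFCE.prof_eLpNorm_ne_zero p hp1
  set E := eLpNorm RdFCE.prof q volume with hEdef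
  have key : ∀ m : ℕ, 1 ≤ m →
      ENNReal.ofReal (Real.sqrt m) * E
        ≤ ENNReal.ofReal C * (ENNReal.ofReal (((4*m : ℕ):ℝ) ^ (1 - 1/p)) * G) := by
    intro m hm
    have hN : 1 ≤ 4*m := by omega
    have happ := hC (RdFCE.fN (4*m) hN)
    simp only [RdFCE.fourier_fN (4*m) hN] at happ
    have hlow : ENNReal.ofReal (Real.sqrt m) * E
        ≤ eLpNorm (fun x : ℝ => Real.sqrt (∑' k : ℤ,
            ‖∫ ξ in Set.Icc (k : ℝ) ((k : ℝ) + 1),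
              (RdFCE.bump (ξ/((4*m : ℕ) : ℝ)) : ℂ) *
                Complex.exp (2 * (Real.pi : ℂ) * Complex.I * (ξ : ℂ) * (x : ℂ))‖ ^ 2))
            q volume := by
      have hs : eLpNorm ((Real.sqrt m : ℝ) • RdFCE.prof) q volume
          = ‖(Real.sqrt m : ℝ)‖ₑ * E := by
        rw [eLpNorm_const_smul]
      have hnn : ‖(Real.sqrt m : ℝ)‖ₑ = ENNReal.ofReal (Real.sqrt m) := by
        rw [← ofReal_norm, Real.norm_eq_abs, abs_of_nonneg (Real.sqrt_nonneg _)]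
      rw [← hnn, ← hs]
      apply eLpNorm_mono_ae
      apply ae_of_all
      intro x
      have hpt := RdFCE.pointwise_lb m hm x
      rw [Real.norm_eq_abs, Real.norm_eq_abs, Pi.smul_apply, smul_eq_mul,
        abs_of_nonneg (mul_nonneg (Real.sqrt_nonneg _) (RdFCE.prof_nonneg x)),
        abs_of_nonneg (Real.sqrt_nonneg _)]
      exact hpt
    calc ENNReal.ofReal (Real.sqrt m) * E ≤ _ := hlow
      _ ≤ ENNReal.ofReal C * eLpNorm ⇑(RdFCE.fN (4*m) hN) q volume := happ
      _ = ENNReal.ofReal C * (ENNReal.ofReal (((4*m : ℕ):ℝ) ^ (1 - 1/p)) * G) := by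
          rw [RdFCE.eLpNorm_fN p hp1 (4*m) hN]
  -- now derive a contradiction
  have hRHSne : ∀ m : ℕ, ENNReal.ofReal C *
      (ENNReal.ofReal (((4*m : ℕ):ℝ) ^ (1 - 1/p)) * G) ≠ ⊤ :=
    fun m => ENNReal.mul_ne_top ENNReal.ofReal_ne_top
      (ENNReal.mul_ne_top ENNReal.ofReal_ne_top hG.ne)
  rcases eq_or_ne E ⊤ with hEtop | hEtop
  · have h1 := key 1 le_rfl
    rw [hEtop] at h1
    have hne : ENNReal.ofReal (Real.sqrt ((1:ℕ):ℝ)) = 1 := by norm_num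
    rw [hne, one_mul] at h1
    exact hRHSne 1 (top_le_iff.mp h1)
  · set A := E.toReal with hA
    have hA0 : 0 < A := ENNReal.toReal_pos hE0 hEtop
    set B := G.toReal with hB
    have hB0 : 0 ≤ B := ENNReal.toReal_nonneg
    set K : ℝ := max C 0 * (4 ^ (1 - 1/p) * B) with hK
    have hreal : ∀ m : ℕ, 1 ≤ m → Real.sqrt m * A ≤ K * (m:ℝ) ^ (1 - 1/p) := by
      intro m hm
      have := ENNReal.toReal_mono (hRHSne m) (key m hm)
      rw [ENNReal.toReal_mul, ENNReal.toReal_mul, ENNReal.toReal_mul,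
        ENNReal.toReal_ofReal (Real.sqrt_nonneg _), ENNReal.toReal_ofReal'] at this
      rw [ENNReal.toReal_ofReal (by positivity : (0:ℝ) ≤ ((4*m : ℕ):ℝ) ^ (1 - 1/p))] at this
      have hcast : ((4*m : ℕ):ℝ) = 4 * (m:ℝ) := by push_cast; ring
      rw [hcast, Real.mul_rpow (by norm_num) (by positivity)] at this
      calc Real.sqrt m * A ≤ max C 0 * (4 ^ (1 - 1/p) * (m:ℝ) ^ (1 - 1/p) * B) := this
        _ = K * (m:ℝ) ^ (1 - 1/p) := by rw [hK]; ring
    have he : 0 < 1/p - 1/2 := by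
      have : (1:ℝ)/2 < 1/p := one_div_lt_one_div_of_lt hp0 hp2
      linarith
    have hrpow : ∀ m : ℕ, 1 ≤ m → (m:ℝ) ^ (1/p - 1/2) * A ≤ K := by
      intro m hm
      have hm0 : (0:ℝ) < (m:ℝ) := by
        have : (0:ℕ) < m := hm
        exact_mod_cast this
      have h1 := hreal m hm
      rw [Real.sqrt_eq_rpow] at h1
      have hpow0 : (0:ℝ) < (m:ℝ) ^ (1 - 1/p) := Real.rpow_pos_of_pos hm0 _
      have hsum_exp : (m:ℝ) ^ (1/p - 1/2) * (m:ℝ) ^ (1 - 1/p) = (m:ℝ) ^ ((1:ℝ)/2) := by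
        rw [← Real.rpow_add hm0]
        congr 1
        ring
      have h2 : (m:ℝ) ^ (1/p - 1/2) * A * (m:ℝ) ^ (1 - 1/p) ≤ K * (m:ℝ) ^ (1 - 1/p) := by
        calc (m:ℝ) ^ (1/p - 1/2) * A * (m:ℝ) ^ (1 - 1/p)
            = (m:ℝ) ^ ((1:ℝ)/2) * A := by rw [mul_right_comm, hsum_exp]
          _ ≤ K * (m:ℝ) ^ (1 - 1/p) := h1
      exact le_of_mul_le_mul_right h2 hpow0
    have htend : Filter.Tendsto (fun m : ℕ => ((m:ℝ)) ^ (1/p - 1/2)) Filter.atTop Filter.atTop :=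
      (tendsto_rpow_atTop he).comp tendsto_natCast_atTop_atTop
    obtain ⟨m, hm1, hm2⟩ : ∃ m : ℕ, 1 ≤ m ∧ K / A < (m:ℝ) ^ (1/p - 1/2) := by
      have h := (htend.eventually_gt_atTop (K / A)).and (Filter.eventually_ge_atTop 1)
      obtain ⟨m, h1, h2⟩ := h.exists
      exact ⟨m, h2, h1⟩
    have hKlt : K < (m:ℝ) ^ (1/p - 1/2) * A := (div_lt_iff₀ hA0).mp hm2
    have := hrpow m hm1
    linarith
end
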